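/- arXiv:1102.0072 — 11 statements merged into one kernel-verified Lean document; each statement's English description precedes it below -/
import Mathlib

section
/- For every field F and every natural number n ≥ 1 there exists a tensor T : [n] × [n] × [⌊lg n⌋ + 1] → F taking only the values 0 and 1 whose tensor rank over F is exactly 2n − 2H(n) + 1, where H(n) is the number of 1s in the binary expansion of n. -/
def Ud : ℕ → ℕ → ℕ → ℕ → Bool
  | 0, _, _, _ => false
  | 1, i, j, k => decide (i = 0 ∧ j = 0 ∧ k = 0)
  | (n+2), i, j, k =>
      if k = 0 then
        decide ((((i = j+1 ∧ j % 2 = 0) ∨ (j = i+1 ∧ i % 2 = 0)) ∧ i < n+2 ∧ j < n+2))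
      else
        decide (i % 2 = 0 ∧ j % 2 = 0) && Ud ((n+2)/2) (i/2) (j/2) (k-1)
  termination_by n _ _ _ => n
  decreasing_by omega

lemma Ud_zero {n i j : ℕ} (hn : 2 ≤ n) :
    Ud n i j 0 = decide ((((i = j+1 ∧ j % 2 = 0) ∨ (j = i+1 ∧ i % 2 = 0)) ∧ i < n ∧ j < n)) := by
  obtain ⟨p, rfl⟩ : ∃ p, n = p + 2 := ⟨n - 2, by omega⟩
  simp [Ud]

lemma Ud_succ {n i j k : ℕ} (hn : 2 ≤ n) :
    Ud n i j (k+1) = (decide (i % 2 = 0 ∧ j % 2 = 0) && Ud (n/2) (i/2) (j/2) k) := by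
  obtain ⟨p, rfl⟩ : ∃ p, n = p + 2 := ⟨n - 2, by omega⟩
  simp [Ud]

lemma Ud_lt {n i j k : ℕ} (h : Ud n i j k = true) : i < n ∧ j < n := by
  induction n using Nat.strong_induction_on generalizing i j k with
  | _ n IH =>
    match n, h with
    | 0, h => simp [Ud] at h
    | 1, h => simp [Ud] at h; omega
    | (n+2), h =>
      rcases Nat.eq_zero_or_pos k with rfl | hk
      · rw [Ud_zero (by omega)] at h; simp at h; omega
      · obtain ⟨k', rfl⟩ : ∃ k', k = k' + 1 := ⟨k - 1, by omega⟩
        rw [Ud_succ (by omega)] at h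
        simp only [Bool.and_eq_true, decide_eq_true_eq] at h
        obtain ⟨⟨hi, hj⟩, h⟩ := h
        have := IH ((n+2)/2) (by omega) h
        omega

def rho (n : ℕ) : ℕ := 2 * n - 2 * (Nat.digits 2 n).sum + 1

lemma digitsum_rec {n : ℕ} (hn : 0 < n) :
    (Nat.digits 2 n).sum = n % 2 + (Nat.digits 2 (n / 2)).sum := by
  rw [Nat.digits_def' (by norm_num : 1 < 2) hn]; simp

lemma digitsum_le (n : ℕ) : (Nat.digits 2 n).sum ≤ n := by
  induction n using Nat.strong_induction_on with
  | _ n IH =>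
    rcases Nat.eq_zero_or_pos n with rfl | hn
    · simp
    · rw [digitsum_rec hn]
      have := IH (n / 2) (by omega)
      omega

lemma rho_one : rho 1 = 1 := by simp [rho]
lemma rho_pos (n : ℕ) : 1 ≤ rho n := by simp [rho]
lemma rho_rec {n : ℕ} (hn : 2 ≤ n) : rho n = 2 * (n / 2) + rho (n / 2) := by
  have h1 := digitsum_rec (show 0 < n by omega)
  have h2 := digitsum_le (n / 2)
  have h3 : n % 2 + 2 * (n / 2) = n := by omega
  simp only [rho]; omega

lemma log_two_rec {n : ℕ} (hn : 2 ≤ n) : Nat.log 2 n = Nat.log 2 (n / 2) + 1 := by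
  have h1 : Nat.log 2 (n / 2) = Nat.log 2 n - 1 := Nat.log_div_base 2 n
  have h2 : 0 < Nat.log 2 n := Nat.log_pos (by norm_num) hn
  omega


def Dec {F : Type*} [Field F] {n1 n2 n3 : ℕ} (r : ℕ) (X : Fin n1 → Fin n2 → Fin n3 → F) : Prop :=
  ∃ (a : Fin r → Fin n1 → F) (b : Fin r → Fin n2 → F) (c : Fin r → Fin n3 → F),
    ∀ i j k, X i j k = ∑ l, a l i * b l j * c l k

lemma dec_comp {F : Type*} [Field F] {n1 n2 n3 n1' n2' n3' r : ℕ}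
    {X : Fin n1 → Fin n2 → Fin n3 → F}
    (f : Fin n1' → Fin n1) (g : Fin n2' → Fin n2) (h : Fin n3' → Fin n3)
    (hd : Dec r X) : Dec r (fun i j k => X (f i) (g j) (h k)) := by
  obtain ⟨a, b, c, hx⟩ := hd
  exact ⟨fun l i => a l (f i), fun l j => b l (g j), fun l k => c l (h k),
    fun i j k => hx (f i) (g j) (h k)⟩

lemma dec_swap {F : Type*} [Field F] {n1 n2 n3 r : ℕ} {X : Fin n1 → Fin n2 → Fin n3 → F}
    (hd : Dec r X) : Dec r (fun j i k => X i j k) := by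
  obtain ⟨a, b, c, hx⟩ := hd
  refine ⟨b, a, c, fun j i k => ?_⟩
  show X i j k = _
  rw [hx i j k]
  exact Finset.sum_congr rfl fun l _ => by ring

lemma dec_step {F : Type*} [Field F] {n1 n2 n3 r : ℕ} {X : Fin n1 → Fin n2 → Fin n3 → F}
    (i0 : Fin n1) (j0 : Fin n2) (k0 : Fin n3) (h0 : X i0 j0 k0 ≠ 0)
    (hd : Dec r X) :
    ∃ lam : Fin n1 → F, lam i0 = 1 ∧
      Dec (r - 1) (fun i j k => X i j k - lam i * X i0 j k) := by
  obtain ⟨a, b, c, hx⟩ := hd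
  have hex : ∃ l, a l i0 ≠ 0 := by
    by_contra hcon
    push_neg at hcon
    apply h0
    rw [hx]
    exact Finset.sum_eq_zero fun l _ => by rw [hcon l]; ring
  obtain ⟨l0, hl0⟩ := hex
  obtain ⟨r', rfl⟩ : ∃ r', r = r' + 1 := ⟨r - 1, by have := l0.pos; omega⟩
  refine ⟨fun i => a l0 i * (a l0 i0)⁻¹, mul_inv_cancel₀ hl0, ?_⟩
  have key : ∀ i j k, X i j k - (a l0 i * (a l0 i0)⁻¹) * X i0 j k =
      ∑ l, (a l i - (a l0 i * (a l0 i0)⁻¹) * a l i0) * b l j * c l k := by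
    intro i j k
    rw [hx i j k, hx i0 j k, Finset.mul_sum, ← Finset.sum_sub_distrib]
    exact Finset.sum_congr rfl fun l _ => by ring
  have hzero : ∀ i, (a l0 i - (a l0 i * (a l0 i0)⁻¹) * a l0 i0) = 0 := by
    intro i; field_simp; ring
  refine ⟨fun l i => (a (l0.succAbove l) i - (a l0 i * (a l0 i0)⁻¹) * a (l0.succAbove l) i0),
    fun l j => b (l0.succAbove l) j, fun l k => c (l0.succAbove l) k, fun i j k => ?_⟩
  show X i j k - (a l0 i * (a l0 i0)⁻¹) * X i0 j k = ∑ l : Fin (r'+1-1),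
      (a (l0.succAbove l) i - (a l0 i * (a l0 i0)⁻¹) * a (l0.succAbove l) i0) *
        b (l0.succAbove l) j * c (l0.succAbove l) k
  rw [key i j k, Fin.sum_univ_succAbove _ l0, hzero, zero_mul, zero_mul, zero_add]
  rfl

lemma dec_sub {F : Type*} [Field F] {n1 n2 n3 : ℕ} (D : Finset (Fin n1)) :
    ∀ (X : Fin n1 → Fin n2 → Fin n3 → F) (r : ℕ),
    (∀ lam : Fin n1 → F, (∀ j k, (∑ i ∈ D, lam i * X i j k) = 0) → ∀ i ∈ D, lam i = 0) →
    Dec r X →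
    ∃ μ : Fin n1 → Fin n1 → F,
      Dec (r - D.card) (fun i j k => X i j k + ∑ i' ∈ D, μ i i' * X i' j k) := by
  induction D using Finset.induction_on with
  | empty =>
    intro X r _ hd
    exact ⟨0, by simpa using hd⟩
  | @insert i0 s hi0 IH =>
    intro X r H2 hd
    have hne : ∃ j k, X i0 j k ≠ 0 := by
      by_contra hcon
      push_neg at hcon
      have h1 := H2 (fun i => if i = i0 then 1 else 0) ?_ i0 (Finset.mem_insert_self _ _)
      · simp at h1
      · intro j k
        rw [Finset.sum_insert hi0]
        beta_reduce
        rw [if_pos rfl, one_mul, hcon j k, zero_add]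
        exact Finset.sum_eq_zero fun i hi => by
          rw [if_neg (fun h : i = i0 => hi0 (h ▸ hi)), zero_mul]
    obtain ⟨j0, k0, h0⟩ := hne
    obtain ⟨lam, hlam1, hd1⟩ := dec_step i0 j0 k0 h0 hd
    set X₁ : Fin n1 → Fin n2 → Fin n3 → F := fun i j k => X i j k - lam i * X i0 j k with hX₁
    have H2' : ∀ lam' : Fin n1 → F, (∀ j k, (∑ i ∈ s, lam' i * X₁ i j k) = 0) →
        ∀ i ∈ s, lam' i = 0 := by
      intro lam' hs i hi
      have hc := H2 (fun i => if i = i0 then -(∑ i' ∈ s, lam' i' * lam i') else lam' i) ?_ i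
        (Finset.mem_insert_of_mem hi)
      · beta_reduce at hc
        rwa [if_neg (fun h : i = i0 => hi0 (h ▸ hi))] at hc
      · intro j k
        rw [Finset.sum_insert hi0]
        beta_reduce
        rw [if_pos rfl]
        have hexp : ∀ i' ∈ s,
            (if i' = i0 then -(∑ i'' ∈ s, lam' i'' * lam i'') else lam' i') * X i' j k
            = lam' i' * X₁ i' j k + lam' i' * lam i' * X i0 j k := by
          intro i' hi'
          rw [if_neg (fun h : i' = i0 => hi0 (h ▸ hi'))]
          simp only [hX₁]
          ring
        rw [Finset.sum_congr rfl hexp, Finset.sum_add_distrib, hs j k, zero_add,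
          ← Finset.sum_mul]
        ring
    obtain ⟨μ', hdec'⟩ := IH X₁ (r - 1) H2' hd1
    refine ⟨fun i i' => if i' = i0 then -(lam i + ∑ i'' ∈ s, μ' i i'' * lam i'') else μ' i i', ?_⟩
    have hcard : r - (insert i0 s).card = r - 1 - s.card := by
      rw [Finset.card_insert_of_notMem hi0]; omega
    rw [hcard]
    convert hdec' using 1
    funext i j k
    rw [Finset.sum_insert hi0]
    beta_reduce
    rw [if_pos rfl]
    have hexp : ∀ i' ∈ s,
        (if i' = i0 then -(lam i + ∑ i'' ∈ s, μ' i i'' * lam i'') else μ' i i') * X i' j k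
        = μ' i i' * X₁ i' j k + μ' i i' * lam i' * X i0 j k := by
      intro i' hi'
      rw [if_neg (fun h : i' = i0 => hi0 (h ▸ hi'))]
      simp only [hX₁]
      ring
    rw [Finset.sum_congr rfl hexp, Finset.sum_add_distrib, ← Finset.sum_mul]
    simp only [hX₁]
    ring


lemma dec_add {F : Type*} [Field F] {n1 n2 n3 r s : ℕ} {X Y : Fin n1 → Fin n2 → Fin n3 → F}
    (hX : Dec r X) (hY : Dec s Y) : Dec (r + s) (fun i j k => X i j k + Y i j k) := by
  obtain ⟨a, b, c, hx⟩ := hX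
  obtain ⟨a', b', c', hy⟩ := hY
  refine ⟨Fin.append a a', Fin.append b b', Fin.append c c', fun i j k => ?_⟩
  show X i j k + Y i j k = _
  rw [Fin.sum_univ_add, hx, hy]
  congr 1 <;> exact Finset.sum_congr rfl fun l _ => by simp

def TT (F : Type*) [Field F] (n : ℕ) : Fin n → Fin n → Fin (Nat.log 2 n + 1) → F :=
  fun i j k => if Ud n i.val j.val k.val then 1 else 0

def Epart (F : Type*) [Field F] (n : ℕ) : Fin n → Fin n → Fin (Nat.log 2 n + 1) → F :=
  fun i j k => if k.val = 0 ∧ Ud n i.val j.val 0 then 1 else 0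

def Lift (F : Type*) [Field F] (n : ℕ) : Fin n → Fin n → Fin (Nat.log 2 n + 1) → F :=
  fun i j k => if k.val = 0 then 0 else (if Ud n i.val j.val k.val then 1 else 0)

lemma TT_split (F : Type*) [Field F] (n : ℕ) (i j : Fin n) (k : Fin (Nat.log 2 n + 1)) :
    TT F n i j k = Epart F n i j k + Lift F n i j k := by
  by_cases hk : k.val = 0 <;> simp [TT, Epart, Lift, hk]

lemma dec_Epart (F : Type*) [Field F] (n : ℕ) (hn : 2 ≤ n) : Dec (2 * (n/2)) (Epart F n) := by
  have hkey : ∀ (i j : Fin n) (k : Fin (Nat.log 2 n + 1)),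
      Epart F n i j k = ∑ l : Fin (2 * (n/2)),
        (if i.val = l.val then (1:F) else 0) *
        (if (l.val % 2 = 0 ∧ j.val = l.val + 1) ∨ (l.val % 2 = 1 ∧ j.val + 1 = l.val)
          then 1 else 0) *
        (if k.val = 0 then 1 else 0) := by
    intro i j k
    show (if k.val = 0 ∧ Ud n i.val j.val 0 then (1:F) else 0) = _
    by_cases hk : k.val = 0
    · by_cases hi : i.val < 2 * (n/2)
      · rw [Finset.sum_eq_single (⟨i.val, hi⟩ : Fin (2 * (n/2)))]
        · have hiff : (Ud n i.val j.val 0 = true) ↔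
              ((i.val % 2 = 0 ∧ j.val = i.val + 1) ∨ (i.val % 2 = 1 ∧ j.val + 1 = i.val)) := by
            rw [Ud_zero hn]
            simp only [decide_eq_true_eq]
            have h1 := i.isLt
            have h2 := j.isLt
            omega
          rw [if_pos rfl, if_pos hk, one_mul, mul_one]
          by_cases hud : Ud n i.val j.val 0 = true
          · rw [if_pos ⟨hk, hud⟩, if_pos (hiff.mp hud)]
          · rw [if_neg (fun h => hud h.2), if_neg (fun hp => hud (hiff.mpr hp))]
        · intro l _ hl
          rw [if_neg (fun h : i.val = l.val => hl (Fin.ext h.symm))]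
          ring
        · intro h
          exact absurd (Finset.mem_univ _) h
      · rw [Finset.sum_eq_zero, if_neg]
        · rintro ⟨-, hud⟩
          rw [Ud_zero hn] at hud
          simp only [decide_eq_true_eq] at hud
          have h2 := j.isLt
          omega
        · intro l _
          rw [if_neg (show ¬ i.val = l.val by have := l.isLt; omega)]
          ring
    · rw [Finset.sum_eq_zero, if_neg (fun h => hk h.1)]
      intro l _
      rw [if_neg hk]
      ring
  exact ⟨_, _, _, hkey⟩

lemma dec_Lift (F : Type*) [Field F] (n : ℕ) (hn : 2 ≤ n) {r : ℕ} (hd : Dec r (TT F (n/2))) :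
    Dec r (Lift F n) := by
  obtain ⟨a, b, c, hm⟩ := hd
  have hkb : ∀ k : Fin (Nat.log 2 n + 1), 0 < k.val → k.val - 1 < Nat.log 2 (n/2) + 1 := by
    intro k hk
    have hb := k.isLt
    have hl := log_two_rec hn
    omega
  have hkey : ∀ (i j : Fin n) (k : Fin (Nat.log 2 n + 1)),
      Lift F n i j k = ∑ l : Fin r,
        (if h : i.val % 2 = 0 ∧ i.val / 2 < n/2 then a l ⟨i.val/2, h.2⟩ else 0) *
        (if h : j.val % 2 = 0 ∧ j.val / 2 < n/2 then b l ⟨j.val/2, h.2⟩ else 0) *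
        (if h : 0 < k.val then c l ⟨k.val - 1, hkb k h⟩ else 0) := by
    intro i j k
    show (if k.val = 0 then 0 else (if Ud n i.val j.val k.val then (1:F) else 0)) = _
    by_cases hk : k.val = 0
    · rw [if_pos hk, Finset.sum_eq_zero]
      intro l _
      rw [dif_neg (show ¬ 0 < k.val by omega)]
      ring
    · rw [if_neg hk]
      have hk' : 0 < k.val := Nat.pos_of_ne_zero hk
      obtain ⟨k', hkk⟩ : ∃ k', k.val = k' + 1 := ⟨k.val - 1, by omega⟩
      by_cases hi : i.val % 2 = 0 ∧ i.val / 2 < n/2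
      · by_cases hj : j.val % 2 = 0 ∧ j.val / 2 < n/2
        · have hterm : ∀ l ∈ (Finset.univ : Finset (Fin r)),
              (if h : i.val % 2 = 0 ∧ i.val / 2 < n/2 then a l ⟨i.val/2, h.2⟩ else 0) *
              (if h : j.val % 2 = 0 ∧ j.val / 2 < n/2 then b l ⟨j.val/2, h.2⟩ else 0) *
              (if h : 0 < k.val then c l ⟨k.val - 1, hkb k h⟩ else 0) =
              a l ⟨i.val/2, hi.2⟩ * b l ⟨j.val/2, hj.2⟩ * c l ⟨k.val - 1, hkb k hk'⟩ := by
            intro l _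
            rw [dif_pos hi, dif_pos hj, dif_pos hk']
          rw [Finset.sum_congr rfl hterm,
            ← hm ⟨i.val/2, hi.2⟩ ⟨j.val/2, hj.2⟩ ⟨k.val - 1, hkb k hk'⟩]
          show (if Ud n i.val j.val k.val then (1:F) else 0) =
            (if Ud (n/2) (i.val/2) (j.val/2) (k.val - 1) then (1:F) else 0)
          rw [hkk, Ud_succ hn]
          simp [hi.1, hj.1]
        · rw [Finset.sum_eq_zero, if_neg]
          · intro h
            rw [hkk, Ud_succ hn] at h
            simp only [Bool.and_eq_true, decide_eq_true_eq] at h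
            exact hj ⟨h.1.2, (Ud_lt h.2).2⟩
          · intro l _
            rw [dif_neg hj]
            ring
      · rw [Finset.sum_eq_zero, if_neg]
        · intro h
          rw [hkk, Ud_succ hn] at h
          simp only [Bool.and_eq_true, decide_eq_true_eq] at h
          exact hi ⟨h.1.1, (Ud_lt h.2).1⟩
        · intro l _
          rw [dif_neg hi]
          ring
  exact ⟨_, _, _, hkey⟩

lemma dec_upper (F : Type*) [Field F] : ∀ n : ℕ, 1 ≤ n → Dec (rho n) (TT F n) := by
  intro n
  induction n using Nat.strong_induction_on with
  | _ n IH =>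
    intro hn
    rcases eq_or_lt_of_le hn with h1 | h2
    · subst h1
      rw [rho_one]
      refine ⟨fun _ _ => 1, fun _ _ => 1, fun _ _ => 1, fun i j k => ?_⟩
      have hi : i.val = 0 := by omega
      have hj : j.val = 0 := by omega
      have hk : k.val = 0 := by
        have := k.isLt
        simp [Nat.log_one_right] at this
        have h0 : Nat.log 2 1 = 0 := Nat.log_one_right 2
        omega
      simp [TT, Ud, hi, hj, hk]
    · have hn2 : 2 ≤ n := h2
      have heq : TT F n = fun i j k => Epart F n i j k + Lift F n i j k :=
        funext fun i => funext fun j => funext fun k => TT_split F n i j k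
      rw [rho_rec hn2, heq]
      exact dec_add (dec_Epart F n hn2)
        (dec_Lift F n hn2 (IH (n/2) (by omega) (by omega)))


def glueT (F : Type*) [Field F] (n t : ℕ) (J : Fin n → Fin n → Fin t → F) :
    Fin n → Fin n → Fin (t + (Nat.log 2 n + 1)) → F :=
  fun i j k => if h : k.val < t then J i j ⟨k.val, h⟩
    else (if Ud n i.val j.val (k.val - t) then 1 else 0)

lemma dec_lower (F : Type*) [Field F] :
    ∀ n : ℕ, 1 ≤ n → ∀ (t : ℕ) (J : Fin n → Fin n → Fin t → F) (r : ℕ),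
      Dec r (glueT F n t J) → rho n ≤ r := by
  intro n
  induction n using Nat.strong_induction_on with
  | _ n IH =>
    intro hn t J r hd
    rcases eq_or_lt_of_le hn with h1 | hn2
    · -- base case n = 1 : the tensor has a 1 entry, so r ≥ 1
      subst h1
      rw [rho_one]
      by_contra hr
      have hr0 : r = 0 := by omega
      subst hr0
      obtain ⟨a, b, c, hx⟩ := hd
      have h0 := hx 0 0 ⟨t, by omega⟩
      rw [Finset.univ_eq_empty, Finset.sum_empty] at h0
      have h1 : glueT F 1 t J 0 0 ⟨t, by omega⟩ = 1 := by
        show (if h : t < t then _ else if Ud 1 0 0 (t - t) then (1:F) else 0) = 1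
        rw [dif_neg (lt_irrefl t), Nat.sub_self]
        simp [Ud]
      rw [h1] at h0
      exact one_ne_zero h0
    · -- main case n ≥ 2
      have hn2' : 2 ≤ n := hn2
      have hm1 : 1 ≤ n / 2 := by omega
      have hmlt : n / 2 < n := by omega
      have hlog : Nat.log 2 n = Nat.log 2 (n / 2) + 1 := log_two_rec hn2'
      set m := n / 2 with hmdef
      set K := t + (Nat.log 2 n + 1) with hKdef
      set X := glueT F n t J with hXdef
      -- index embeddings
      have hdblb : ∀ a : Fin m, 2 * a.val < n := by intro a; have := a.isLt; omega
      have hoddb : ∀ c : Fin m, 2 * c.val + 1 < n := by intro c; have := c.isLt; omega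
      set dbl : Fin m → Fin n := fun a => ⟨2 * a.val, hdblb a⟩ with hdbldef
      set odd : Fin m → Fin n := fun c => ⟨2 * c.val + 1, hoddb c⟩ with hodddef
      have hoddinj : Function.Injective odd := by
        intro x y h
        have hval : 2 * x.val + 1 = 2 * y.val + 1 := congrArg Fin.val h
        exact Fin.ext (by omega)
      set D1 : Finset (Fin n) := Finset.univ.image odd with hD1def
      have hD1card : D1.card = m := by
        rw [hD1def, Finset.card_image_of_injective _ hoddinj, Finset.card_univ,
          Fintype.card_fin]
      have himg : ∀ x ∈ (Finset.univ : Finset (Fin m)), ∀ y ∈ (Finset.univ : Finset (Fin m)),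
          odd x = odd y → x = y := fun x _ y _ h => hoddinj h
      have hkE : t < K := by omega
      set kE : Fin K := ⟨t, hkE⟩ with hkEdef
      -- slice-t values of X
      have hXslice : ∀ (i j : Fin n), X i j kE = if Ud n i.val j.val 0 then (1:F) else 0 := by
        intro i j
        show (if h : t < t then _ else if Ud n i.val j.val (t - t) then (1:F) else 0) = _
        rw [dif_neg (lt_irrefl t), Nat.sub_self]
      have hXoc : ∀ (c c0 : Fin m), X (odd c) (dbl c0) kE = if c = c0 then (1:F) else 0 := by
        intro c c0
        rw [hXslice]
        have hc := c.isLt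
        have hc0 := c0.isLt
        show (if Ud n (2*c.val+1) (2*c0.val) 0 then (1:F) else 0) = _
        rw [Ud_zero hn2']
        by_cases h : c = c0
        · subst h
          rw [if_pos rfl, if_pos]
          rw [decide_eq_true_eq]
          refine ⟨Or.inl ⟨rfl, by omega⟩, by omega, by omega⟩
        · have hvne : c.val ≠ c0.val := fun hv => h (Fin.ext hv)
          rw [if_neg h, if_neg]
          rw [decide_eq_true_eq]
          rintro ⟨h1 | h2, -, -⟩ <;> omega
      have hXeo : ∀ (a c : Fin m), X (dbl a) (odd c) kE = if a = c then (1:F) else 0 := by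
        intro a c
        rw [hXslice]
        have ha := a.isLt
        have hc := c.isLt
        show (if Ud n (2*a.val) (2*c.val+1) 0 then (1:F) else 0) = _
        rw [Ud_zero hn2']
        by_cases h : a = c
        · subst h
          rw [if_pos rfl, if_pos]
          rw [decide_eq_true_eq]
          refine ⟨Or.inr ⟨rfl, by omega⟩, by omega, by omega⟩
        · have hvne : a.val ≠ c.val := fun hv => h (Fin.ext hv)
          rw [if_neg h, if_neg]
          rw [decide_eq_true_eq]
          rintro ⟨h1 | h2, -, -⟩ <;> omega
      have hXoo : ∀ (i' : Fin n), i'.val % 2 = 1 → ∀ c : Fin m, X i' (odd c) kE = 0 := by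
        intro i' hi' c
        rw [hXslice]
        show (if Ud n i'.val (2*c.val+1) 0 then (1:F) else 0) = 0
        rw [Ud_zero hn2', if_neg]
        rw [decide_eq_true_eq]
        rintro ⟨h1 | h2, -, -⟩ <;> omega
      -- high slices vanish on odd rows / odd columns
      have hXhigh : ∀ (i j : Fin n) (k : Fin K), t < k.val →
          X i j k = if Ud n i.val j.val (k.val - t) then (1:F) else 0 := by
        intro i j k hk
        show (if h : k.val < t then _ else _) = _
        rw [dif_neg (by omega)]
      have hXodd1 : ∀ (i' : Fin n), i'.val % 2 = 1 → ∀ (j : Fin n) (k : Fin K),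
          t < k.val → X i' j k = 0 := by
        intro i' hi' j k hk
        rw [hXhigh i' j k hk, if_neg]
        obtain ⟨k'', hk''⟩ : ∃ k'', k.val - t = k'' + 1 := ⟨k.val - t - 1, by omega⟩
        rw [hk'', Ud_succ hn2']
        simp [hi']
      have hXodd2 : ∀ (j' : Fin n), j'.val % 2 = 1 → ∀ (i : Fin n) (k : Fin K),
          t < k.val → X i j' k = 0 := by
        intro j' hj' i k hk
        rw [hXhigh i j' k hk, if_neg]
        obtain ⟨k'', hk''⟩ : ∃ k'', k.val - t = k'' + 1 := ⟨k.val - t - 1, by omega⟩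
        rw [hk'', Ud_succ hn2']
        simp [hj']
      have hoddval : ∀ c : Fin m, (odd c).val % 2 = 1 := by
        intro c
        show (2 * c.val + 1) % 2 = 1
        omega
      -- Stage 1 : eliminate odd rows
      have H2₁ : ∀ lam : Fin n → F, (∀ (j : Fin n) (k : Fin K),
          (∑ i ∈ D1, lam i * X i j k) = 0) → ∀ i ∈ D1, lam i = 0 := by
        intro lam hz i hi
        rw [hD1def, Finset.mem_image] at hi
        obtain ⟨c0, -, rfl⟩ := hi
        have h0 := hz (dbl c0) kE
        rw [hD1def, Finset.sum_image himg] at h0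
        rw [Finset.sum_eq_single c0 (fun c _ hne => by rw [hXoc c c0, if_neg hne, mul_zero])
          (fun habs => absurd (Finset.mem_univ _) habs)] at h0
        rw [hXoc c0 c0, if_pos rfl, mul_one] at h0
        exact h0
      obtain ⟨μ, hd1⟩ := dec_sub D1 X r H2₁ hd
      rw [hD1card] at hd1
      set X₁ : Fin n → Fin n → Fin K → F :=
        fun i j k => X i j k + ∑ i' ∈ D1, μ i i' * X i' j k with hX₁def
      -- restrict rows to even ones and swap modes
      have hdY : Dec (r - m) (fun (j : Fin n) (a : Fin m) (k : Fin K) => X₁ (dbl a) j k) :=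
        dec_comp id dbl id (dec_swap hd1)
      set Y : Fin n → Fin m → Fin K → F := fun j a k => X₁ (dbl a) j k with hYdef
      -- values of X₁ we need
      have hX₁eo : ∀ (a c : Fin m), X₁ (dbl a) (odd c) kE = if a = c then (1:F) else 0 := by
        intro a c
        rw [hX₁def]
        beta_reduce
        rw [hXeo a c, hD1def, Finset.sum_image himg, Finset.sum_eq_zero, add_zero]
        intro c' _
        rw [hXoo (odd c') (hoddval c') c, mul_zero]
      -- Stage 2 : eliminate odd columns
      have H2₂ : ∀ lam : Fin n → F, (∀ (a : Fin m) (k : Fin K),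
          (∑ j ∈ D1, lam j * Y j a k) = 0) → ∀ j ∈ D1, lam j = 0 := by
        intro lam hz j hj
        rw [hD1def, Finset.mem_image] at hj
        obtain ⟨c0, -, rfl⟩ := hj
        have h0 := hz c0 kE
        rw [hD1def, Finset.sum_image himg] at h0
        have hterm2 : ∀ c ∈ (Finset.univ : Finset (Fin m)),
            lam (odd c) * Y (odd c) c0 kE = if c = c0 then lam (odd c) else 0 := by
          intro c _
          show lam (odd c) * X₁ (dbl c0) (odd c) kE = _
          rw [hX₁eo c0 c]
          by_cases h : c = c0
          · subst h; rw [if_pos rfl, if_pos rfl, mul_one]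
          · rw [if_neg (fun hh : c0 = c => h hh.symm), if_neg h, mul_zero]
        rw [Finset.sum_congr rfl hterm2, Finset.sum_ite_eq' Finset.univ c0] at h0
        rw [if_pos (Finset.mem_univ c0)] at h0
        exact h0
      obtain ⟨ν, hd2⟩ := dec_sub D1 Y (r - m) H2₂ hdY
      rw [hD1card] at hd2
      set Y₁ : Fin n → Fin m → Fin K → F :=
        fun j a k => Y j a k + ∑ j' ∈ D1, ν j j' * Y j' a k with hY₁def
      -- core tensor on even rows and columns
      have hdZ : Dec (r - m - m) (fun (a b : Fin m) (k : Fin K) => Y₁ (dbl b) a k) :=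
        dec_comp id dbl id (dec_swap hd2)
      set Z : Fin m → Fin m → Fin K → F := fun a b k => Y₁ (dbl b) a k with hZdef
      -- recast the slice index
      have hKeq : (t + 1) + (Nat.log 2 m + 1) = K := by rw [hKdef, hlog]; omega
      have hcastb : ∀ k : Fin ((t+1) + (Nat.log 2 m + 1)), k.val < K := by
        intro k; have := k.isLt; omega
      set cast : Fin ((t+1) + (Nat.log 2 m + 1)) → Fin K := fun k => ⟨k.val, hcastb k⟩
        with hcastdef
      have hdW : Dec (r - m - m)
          (fun (a b : Fin m) (k : Fin ((t+1) + (Nat.log 2 m + 1))) => Z a b (cast k)) :=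
        dec_comp id id cast hdZ
      set W : Fin m → Fin m → Fin ((t+1) + (Nat.log 2 m + 1)) → F :=
        fun a b k => Z a b (cast k) with hWdef
      -- W is a glued tensor for m
      have hJ'b : ∀ k : Fin (t+1), k.val < (t+1) + (Nat.log 2 m + 1) := by
        intro k; have := k.isLt; omega
      set J' : Fin m → Fin m → Fin (t+1) → F := fun a b k => W a b ⟨k.val, hJ'b k⟩
        with hJ'def
      have hWeq : W = glueT F m (t+1) J' := by
        funext a b k
        show W a b k = if h : k.val < t + 1 then J' a b ⟨k.val, h⟩
          else (if Ud m a.val b.val (k.val - (t+1)) then 1 else 0)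
        by_cases hk : k.val < t + 1
        · rw [dif_pos hk, hJ'def]
        · rw [dif_neg hk]
          have hkt : t < (cast k).val := by
            rw [hcastdef]
            show t < k.val
            omega
          have hZval : W a b k = X (dbl a) (dbl b) (cast k) := by
            rw [hWdef]
            beta_reduce
            rw [hZdef]
            beta_reduce
            rw [hY₁def]
            beta_reduce
            have hz2 : ∑ j' ∈ D1, ν (dbl b) j' * Y j' a (cast k) = 0 := by
              rw [hD1def, Finset.sum_image himg, Finset.sum_eq_zero]
              intro c _
              rw [hYdef]
              beta_reduce
              rw [hX₁def]
              beta_reduce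
              rw [hXodd2 (odd c) (hoddval c) (dbl a) (cast k) hkt, Finset.sum_eq_zero,
                add_zero, mul_zero]
              intro i' hi'
              rw [hD1def, Finset.mem_image] at hi'
              obtain ⟨c', -, rfl⟩ := hi'
              rw [hXodd2 (odd c) (hoddval c) (odd c') (cast k) hkt, mul_zero]
            rw [hz2, add_zero, hYdef]
            beta_reduce
            rw [hX₁def]
            beta_reduce
            rw [Finset.sum_eq_zero, add_zero]
            intro i' hi'
            rw [hD1def, Finset.mem_image] at hi'
            obtain ⟨c', -, rfl⟩ := hi'
            rw [hXodd1 (odd c') (hoddval c') (dbl b) (cast k) hkt, mul_zero]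
          rw [hZval, hXhigh _ _ _ hkt]
          have hsub : (cast k).val - t = (k.val - (t+1)) + 1 := by
            rw [hcastdef]
            show k.val - t = _
            omega
          rw [hsub, Ud_succ hn2']
          have hae : (2 * a.val) % 2 = 0 := by omega
          have hbe : (2 * b.val) % 2 = 0 := by omega
          have had : (2 * a.val) / 2 = a.val := by omega
          have hbd : (2 * b.val) / 2 = b.val := by omega
          show (if (decide ((2*a.val) % 2 = 0 ∧ (2*b.val) % 2 = 0) &&
            Ud (n/2) ((2*a.val)/2) ((2*b.val)/2) (k.val - (t+1))) = true then (1:F) else 0) = _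
          rw [hae, hbe, had, hbd]
          simp
          rfl
      rw [hWeq] at hdW
      have hrho := IH m hmlt hm1 (t+1) J' (r - m - m) hdW
      have hrm := rho_pos m
      have hrr := rho_rec hn2'
      rw [← hmdef] at hrr
      omega


/-- The tensor rank of an order-3 tensor `T : [n₁] × [n₂] × [n₃] → F`:
the least `r` such that `T` is the sum of `r` simple tensors. -/
noncomputable def rank3 {F : Type*} [Field F] {n1 n2 n3 : ℕ}
    (T : Fin n1 → Fin n2 → Fin n3 → F) : ℕ :=
  sInf {r : ℕ | ∃ (a : Fin r → Fin n1 → F) (b : Fin r → Fin n2 → F) (c : Fin r → Fin n3 → F),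
    ∀ i j k, T i j k = ∑ l, a l i * b l j * c l k}

/-- For every field `F` and every `n ≥ 1` there is a 0/1-valued tensor of size
`[n] × [n] × [⌊lg n⌋ + 1]` whose rank over `F` is exactly `2n - 2H(n) + 1`,
where `H(n)` is the number of 1s in the binary expansion of `n`. -/
theorem stmt0 (F : Type*) [Field F] (n : ℕ) (hn : 1 ≤ n) :
    ∃ T : Fin n → Fin n → Fin (Nat.log 2 n + 1) → F,
      (∀ i j k, T i j k = 0 ∨ T i j k = 1) ∧
      rank3 T = 2 * n - 2 * (Nat.digits 2 n).sum + 1 := by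
  refine ⟨TT F n, fun i j k => ?_, ?_⟩
  · by_cases h : Ud n i.val j.val k.val <;> simp [TT, h]
  · have hub : Dec (rho n) (TT F n) := dec_upper F n hn
    have hlb : ∀ r : ℕ, Dec r (TT F n) → rho n ≤ r := by
      intro r hr
      have hb : ∀ k : Fin (0 + (Nat.log 2 n + 1)), k.val < Nat.log 2 n + 1 := by
        intro k; have := k.isLt; omega
      have hkey : glueT F n 0 (fun _ _ k => k.elim0) =
          fun i j (k : Fin (0 + (Nat.log 2 n + 1))) => TT F n i j ⟨k.val, hb k⟩ := by
        funext i j k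
        show (if h : k.val < 0 then _ else if Ud n i.val j.val (k.val - 0) then (1:F) else 0) = _
        rw [dif_neg (by omega), Nat.sub_zero]
        rfl
      apply dec_lower F n hn 0 (fun _ _ k => k.elim0) r
      rw [hkey]
      exact dec_comp id id (fun k => ⟨k.val, hb k⟩) hr
    have hmain : rank3 (TT F n) = rho n := by
      apply le_antisymm
      · exact Nat.sInf_le hub
      · exact le_csInf ⟨rho n, hub⟩ hlb
    rw [hmain, rho]
end

section
/- Let F be a field, n, k ≥ 1, and let A_1,…,A_k be n × n matrices over F. Let I_n denote the n × n identity matrix. Consider the order-3 tensor of size [2n] × [2n] × [k+1] whose first layer along the third axis is the 2n × 2n block matrix [[I_n, 0],[0, I_n]] and whose (l+1)-st layer, for l = 1,…,k, is the 2n × 2n block matrix [[0, 0],[A_l, 0]] (with A_l in the bottom-left n × n block). Then the rank of this tensor is at least rank([A_1|⋯|A_k]) + 2n, where [A_1|⋯|A_k] denotes the order-3 tensor of size [n] × [n] × [k] whose l-th layer along the third axis is A_l. -/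
namespace Stmt2Aux

variable {F : Type*} [Field F]

/-- `T` has a decomposition into simple tensors indexed by `ρ`. -/
def Dec {ι₁ ι₂ ι₃ : Type*} (ρ : Type*) [Fintype ρ] (T : ι₁ → ι₂ → ι₃ → F) : Prop :=
  ∃ (a : ρ → ι₁ → F) (b : ρ → ι₂ → F) (c : ρ → ι₃ → F),
    ∀ i j k, T i j k = ∑ p, a p i * b p j * c p k

lemma Dec.comp {ι₁ ι₂ ι₃ κ₁ κ₂ κ₃ ρ : Type*} [Fintype ρ]
    {T : ι₁ → ι₂ → ι₃ → F} (h : Dec ρ T) (f : κ₁ → ι₁) (g : κ₂ → ι₂) (e : κ₃ → ι₃) :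
    Dec ρ (fun i j k => T (f i) (g j) (e k)) := by
  obtain ⟨a, b, c, h⟩ := h
  exact ⟨fun p i => a p (f i), fun p j => b p (g j), fun p k => c p (e k),
    fun i j k => h _ _ _⟩

lemma Dec.swap12 {ι₁ ι₂ ι₃ ρ : Type*} [Fintype ρ] {T : ι₁ → ι₂ → ι₃ → F} (h : Dec ρ T) :
    Dec ρ (fun j i k => T i j k) := by
  obtain ⟨a, b, c, h⟩ := h
  refine ⟨b, a, c, fun j i k => ?_⟩
  show T i j k = _
  rw [h]
  exact Finset.sum_congr rfl fun p _ => by ring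

lemma Dec.reindex {ι₁ ι₂ ι₃ ρ ρ' : Type*} [Fintype ρ] [Fintype ρ']
    {T : ι₁ → ι₂ → ι₃ → F} (e : ρ' ≃ ρ) (h : Dec ρ T) : Dec ρ' T := by
  obtain ⟨a, b, c, h⟩ := h
  refine ⟨fun p => a (e p), fun p => b (e p), fun p => c (e p), fun i j k => ?_⟩
  rw [h]
  exact (Equiv.sum_comp e fun p => a p i * b p j * c p k).symm

lemma Dec.toFin {ι₁ ι₂ ι₃ ρ : Type*} [Fintype ρ] {T : ι₁ → ι₂ → ι₃ → F} (h : Dec ρ T) :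
    Dec (Fin (Fintype.card ρ)) T :=
  h.reindex (Fintype.equivFin ρ).symm

lemma dec_all {ι₁ ι₂ ι₃ : Type*} [Fintype ι₁] [DecidableEq ι₁] [Fintype ι₂] [DecidableEq ι₂]
    (T : ι₁ → ι₂ → ι₃ → F) : Dec (ι₁ × ι₂) T := by
  refine ⟨fun p i => if i = p.1 then 1 else 0, fun p j => if j = p.2 then 1 else 0,
    fun p k => T p.1 p.2 k, fun i j k => ?_⟩
  rw [Fintype.sum_prod_type]
  simp

lemma rank3_le {n1 n2 n3 r : ℕ} {T : Fin n1 → Fin n2 → Fin n3 → F}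
    (h : Dec (Fin r) T) : rank3 T ≤ r :=
  Nat.sInf_le h

lemma rank3_dec {n1 n2 n3 : ℕ} (T : Fin n1 → Fin n2 → Fin n3 → F) :
    Dec (Fin (rank3 T)) T := by
  have h : Dec (Fin (n1 * n2)) T := by
    have h2 := (dec_all T).toFin
    rwa [show Fintype.card (Fin n1 × Fin n2) = n1 * n2 by simp] at h2
  have hne : {r : ℕ | Dec (Fin r) T}.Nonempty := ⟨n1 * n2, h⟩
  exact Nat.sInf_mem hne


lemma subst {ι₁ ι₂ ι₃ : Type*} {r : ℕ} {T : ι₁ → ι₂ → ι₃ → F}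
    (hd : Dec (Fin r) T) (i₀ : ι₁) {j₀ : ι₂} {k₀ : ι₃} (h0 : T i₀ j₀ k₀ ≠ 0) :
    ∃ (lam : ι₁ → F) (r₁ : ℕ), r₁ + 1 = r ∧
      Dec (Fin r₁) (fun (i : {i : ι₁ // i ≠ i₀}) (j : ι₂) (k : ι₃) =>
        T i.1 j k - lam i.1 * T i₀ j k) := by
  classical
  obtain ⟨a, b, c, h⟩ := hd
  have hp : ∃ p : Fin r, a p i₀ ≠ 0 := by
    by_contra hc
    push_neg at hc
    exact h0 (by rw [h]; exact Finset.sum_eq_zero fun p _ => by rw [hc p]; ring)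
  obtain ⟨p₀, hp₀⟩ := hp
  have hr : r - 1 + 1 = r := by have := p₀.isLt; omega
  refine ⟨fun i => a p₀ i / a p₀ i₀, r - 1, hr, ?_⟩
  have hcard : Fintype.card {p : Fin r // p ≠ p₀} = r - 1 := by
    simp [Fintype.card_subtype_compl, Fintype.card_subtype_eq]
  have hdec : Dec {p : Fin r // p ≠ p₀}
      (fun (i : {i : ι₁ // i ≠ i₀}) (j : ι₂) (k : ι₃) =>
        T i.1 j k - (a p₀ i.1 / a p₀ i₀) * T i₀ j k) := by
    refine ⟨fun p i => a p.1 i - (a p₀ i / a p₀ i₀) * a p.1 i₀,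
      fun p j => b p.1 j, fun p k => c p.1 k, fun i j k => ?_⟩
    have hzero : (a p₀ i.1 - (a p₀ i.1 / a p₀ i₀) * a p₀ i₀) * b p₀ j * c p₀ k = 0 := by
      rw [div_mul_cancel₀ _ hp₀]
      ring
    have h1 : T i.1 j k - (a p₀ i.1 / a p₀ i₀) * T i₀ j k
        = ∑ q : Fin r, ((a q i.1 - (a p₀ i.1 / a p₀ i₀) * a q i₀) * b q j * c q k) := by
      rw [h, h, Finset.mul_sum, ← Finset.sum_sub_distrib]
      exact Finset.sum_congr rfl fun q _ => by ring
    have h2 : ∑ q ∈ Finset.univ.erase p₀,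
          ((a q i.1 - (a p₀ i.1 / a p₀ i₀) * a q i₀) * b q j * c q k)
        = ∑ q : Fin r, ((a q i.1 - (a p₀ i.1 / a p₀ i₀) * a q i₀) * b q j * c q k) :=
      Finset.sum_erase _ hzero
    have h3 : ∑ q ∈ Finset.univ.erase p₀,
          ((a q i.1 - (a p₀ i.1 / a p₀ i₀) * a q i₀) * b q j * c q k)
        = ∑ p : {p : Fin r // p ≠ p₀},
          ((a p.1 i.1 - (a p₀ i.1 / a p₀ i₀) * a p.1 i₀) * b p.1 j * c p.1 k) := by
      apply Finset.sum_subtype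
      intro x
      simp
    show T i.1 j k - (a p₀ i.1 / a p₀ i₀) * T i₀ j k = _
    simp only []
    rw [h1, ← h2, h3]
  have hfin := hdec.toFin
  rwa [hcard] at hfin


lemma elim {ι₂ ι₃ σ : Type*} (Z : Set (ι₂ × ι₃)) (N : ℕ) :
    ∀ (τ : Type) [Fintype τ] [DecidableEq τ], Fintype.card τ = N →
    ∀ (r : ℕ) (T : τ ⊕ σ → ι₂ → ι₃ → F) (π : τ → ι₂ × ι₃),
      Dec (Fin r) T →
      (∀ t t', T (Sum.inl t) (π t').1 (π t').2 = if t = t' then 1 else 0) →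
      (∀ t jk, jk ∈ Z → T (Sum.inl t) jk.1 jk.2 = 0) →
      ∃ (r' : ℕ) (T' : σ → ι₂ → ι₃ → F), r' + N ≤ r ∧ Dec (Fin r') T' ∧
        ∀ i jk, jk ∈ Z → T' i jk.1 jk.2 = T (Sum.inr i) jk.1 jk.2 := by
  induction N with
  | zero =>
    intro τ _ _ hcard r T π hdec hpiv hZ
    exact ⟨r, fun i => T (Sum.inr i), by omega, hdec.comp Sum.inr id id,
      fun i jk _ => rfl⟩
  | succ N ih =>
    intro τ _ _ hcard r T π hdec hpiv hZ
    classical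
    obtain ⟨t₀⟩ : Nonempty τ := Fintype.card_pos_iff.mp (by omega)
    have hne : T (Sum.inl t₀) (π t₀).1 (π t₀).2 ≠ 0 := by
      rw [hpiv]
      simp
    obtain ⟨lam, r₁, hr₁, hdec₁⟩ := subst hdec (Sum.inl t₀) hne
    let f : {t : τ // t ≠ t₀} ⊕ σ → {i : τ ⊕ σ // i ≠ Sum.inl t₀} := fun x =>
      match x with
      | Sum.inl t => ⟨Sum.inl t.1, by simp [t.2]⟩
      | Sum.inr s => ⟨Sum.inr s, by simp⟩
    let T₂ : {t : τ // t ≠ t₀} ⊕ σ → ι₂ → ι₃ → F := fun x j k =>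
      T (f x).1 j k - lam (f x).1 * T (Sum.inl t₀) j k
    have hdec₂ : Dec (Fin r₁) T₂ := hdec₁.comp f id id
    have hcard' : Fintype.card {t : τ // t ≠ t₀} = N := by
      have h5 : Fintype.card {t : τ // t ≠ t₀} = Fintype.card τ - 1 := by
        simp [Fintype.card_subtype_compl, Fintype.card_subtype_eq]
      omega
    have hpiv₂ : ∀ t t' : {t : τ // t ≠ t₀}, T₂ (Sum.inl t) (π t'.1).1 (π t'.1).2
        = if t = t' then 1 else 0 := by
      intro t t'
      show T (Sum.inl t.1) _ _ - lam (Sum.inl t.1) * T (Sum.inl t₀) _ _ = _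
      rw [hpiv, hpiv, if_neg (fun hh : t₀ = t'.1 => t'.2 hh.symm)]
      rcases eq_or_ne t t' with hq | hq
      · subst hq
        simp
      · rw [if_neg (fun hh => hq (Subtype.ext hh)), if_neg hq]
        ring
    have hZ₂ : ∀ (t : {t : τ // t ≠ t₀}) jk, jk ∈ Z → T₂ (Sum.inl t) jk.1 jk.2 = 0 := by
      intro t jk hjk
      show T (Sum.inl t.1) _ _ - lam (Sum.inl t.1) * T (Sum.inl t₀) _ _ = 0
      rw [hZ _ _ hjk, hZ _ _ hjk]
      ring
    obtain ⟨r', T', hle, hd, hmatch⟩ := ih {t : τ // t ≠ t₀} hcard' r₁ T₂ (fun t => π t.1) hdec₂ hpiv₂ hZ₂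
    refine ⟨r', T', by omega, hd, fun i jk hjk => ?_⟩
    rw [hmatch i jk hjk]
    show T (Sum.inr i) _ _ - lam (Sum.inr i) * T (Sum.inl t₀) _ _ = _
    rw [hZ _ _ hjk]
    ring


lemma main {F : Type*} [Field F] (n k : ℕ) (A : Fin k → Matrix (Fin n) (Fin n) F)
    (TB : Fin (2 * n) → Fin (2 * n) → Fin (k + 1) → F)
    (H0 : ∀ i j, TB i j 0 = if i = j then 1 else 0)
    (HA : ∀ (i j : Fin (2 * n)) (l : Fin (k + 1)) (hl : l ≠ 0), n ≤ (i : ℕ) → (j : ℕ) < n →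
      ∀ (i' j' : Fin n), (i' : ℕ) + n = (i : ℕ) → (j' : ℕ) = (j : ℕ) →
        TB i j l = A (l.pred hl) i' j')
    (HZ : ∀ (i j : Fin (2 * n)) (l : Fin (k + 1)), l ≠ 0 →
      (¬ n ≤ (i : ℕ) ∨ ¬ (j : ℕ) < n) → TB i j l = 0) :
    rank3 (fun (i j : Fin n) (l : Fin k) => A l i j) + 2 * n ≤ rank3 TB := by
  classical
  have hdecBig : Dec (Fin (rank3 TB)) TB := rank3_dec TB
  let e : Fin n ⊕ Fin n ≃ Fin (2 * n) := finSumFinEquiv.trans (finCongr (two_mul n).symm)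
  have he1 : ∀ t : Fin n, ((e (Sum.inl t)) : ℕ) = (t : ℕ) := fun t => by
    simp [e]
  have he2 : ∀ t : Fin n, ((e (Sum.inr t)) : ℕ) = n + (t : ℕ) := fun t => by
    simp [e]
    omega
  let T₀ : Fin n ⊕ Fin n → Fin n ⊕ Fin n → Fin (k + 1) → F := fun x y l => TB (e x) (e y) l
  have hdec₀ : Dec (Fin (rank3 TB)) T₀ := hdecBig.comp e e id
  -- phase 1 : eliminate the top rows
  let Z₁ : Set ((Fin n ⊕ Fin n) × Fin (k + 1)) := {jk | jk.2 ≠ 0 ∨ ∃ j, jk.1 = Sum.inr j}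
  have hpiv₁ : ∀ t t' : Fin n, T₀ (Sum.inl t) (Sum.inl t') 0 = if t = t' then 1 else 0 := by
    intro t t'
    show TB (e (Sum.inl t)) (e (Sum.inl t')) 0 = _
    rcases eq_or_ne t t' with h | h
    · subst h
      rw [H0, if_pos rfl, if_pos rfl]
    · rw [H0, if_neg (fun hh => h (Sum.inl.inj (e.injective hh))), if_neg h]
  have hZ₁ : ∀ (t : Fin n) (jk : (Fin n ⊕ Fin n) × Fin (k + 1)), jk ∈ Z₁ →
      T₀ (Sum.inl t) jk.1 jk.2 = 0 := by
    intro t jk hjk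
    show TB (e (Sum.inl t)) (e jk.1) jk.2 = 0
    rcases eq_or_ne jk.2 0 with h2 | h2
    · rcases hjk with h | ⟨j, hj⟩
      · exact absurd h2 h
      · rw [hj, h2, H0, if_neg]
        intro hh
        have := congrArg Fin.val hh
        rw [he1, he2] at this
        have := t.isLt
        omega
    · apply HZ _ _ _ h2
      left
      rw [he1]
      have := t.isLt
      omega
  obtain ⟨r₁, T', hle₁, hdec₁, hm₁⟩ :=
    elim (F := F) Z₁ n (Fin n) (Fintype.card_fin n) (rank3 TB) T₀
      (fun t => (Sum.inl t, 0)) hdec₀ hpiv₁ hZ₁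
  -- facts about T'
  have hT'a : ∀ (i j : Fin n) (l : Fin (k + 1)) (hl : l ≠ 0),
      T' i (Sum.inl j) l = A (l.pred hl) i j := by
    intro i j l hl
    have h := hm₁ i (Sum.inl j, l) (Or.inl hl)
    rw [h]
    show TB (e (Sum.inr i)) (e (Sum.inl j)) l = _
    apply HA _ _ _ hl
    · rw [he2]; omega
    · rw [he1]; exact j.isLt
    · rw [he2]; omega
    · rw [he1]
  have hT'b : ∀ i j : Fin n, T' i (Sum.inr j) 0 = if i = j then 1 else 0 := by
    intro i j
    have h := hm₁ i (Sum.inr j, 0) (Or.inr ⟨j, rfl⟩)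
    rw [h]
    show TB (e (Sum.inr i)) (e (Sum.inr j)) 0 = _
    rcases eq_or_ne i j with hq | hq
    · subst hq
      rw [H0, if_pos rfl, if_pos rfl]
    · rw [H0, if_neg (fun hh => hq (Sum.inr.inj (e.injective hh))), if_neg hq]
  have hT'c : ∀ (i j : Fin n) (l : Fin (k + 1)), l ≠ 0 → T' i (Sum.inr j) l = 0 := by
    intro i j l hl
    have h := hm₁ i (Sum.inr j, l) (Or.inl hl)
    rw [h]
    show TB (e (Sum.inr i)) (e (Sum.inr j)) l = 0
    apply HZ _ _ _ hl
    right
    rw [he2]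
    omega
  -- phase 2 : eliminate the right columns
  let U : Fin n ⊕ Fin n → Fin n → Fin (k + 1) → F := fun x i l => T' i (Sum.swap x) l
  have hdecU : Dec (Fin r₁) U := hdec₁.swap12.comp Sum.swap id id
  let Z₂ : Set (Fin n × Fin (k + 1)) := {ik | ik.2 ≠ 0}
  have hpiv₂ : ∀ t t' : Fin n, U (Sum.inl t) t' 0 = if t = t' then 1 else 0 := by
    intro t t'
    show T' t' (Sum.inr t) 0 = _
    rw [hT'b]
    rcases eq_or_ne t t' with h | h
    · subst h
      rfl
    · rw [if_neg (Ne.symm h), if_neg h]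
  have hZ₂ : ∀ (t : Fin n) (ik : Fin n × Fin (k + 1)), ik ∈ Z₂ →
      U (Sum.inl t) ik.1 ik.2 = 0 := by
    intro t ik hik
    show T' ik.1 (Sum.inr t) ik.2 = 0
    exact hT'c _ _ _ hik
  obtain ⟨r₂, U', hle₂, hdec₂, hm₂⟩ :=
    elim (F := F) Z₂ n (Fin n) (Fintype.card_fin n) r₁ U
      (fun t => (t, 0)) hdecU hpiv₂ hZ₂
  -- final : the remaining tensor contains [A₁|⋯|A_k]
  have hdecV : Dec (Fin r₂) (fun (i j : Fin n) (l : Fin k) => U' j i l.succ) :=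
    hdec₂.swap12.comp id id Fin.succ
  have heq : (fun (i j : Fin n) (l : Fin k) => A l i j)
      = (fun (i j : Fin n) (l : Fin k) => U' j i l.succ) := by
    funext i j l
    have h := hm₂ j (i, l.succ) (Fin.succ_ne_zero l)
    have h2 : U (Sum.inr j) i l.succ = A l i j := by
      show T' i (Sum.inl j) l.succ = A l i j
      rw [hT'a i j l.succ (Fin.succ_ne_zero l)]
      congr 1
    exact (h.trans h2).symm
  have hfinal : rank3 (fun (i j : Fin n) (l : Fin k) => A l i j) ≤ r₂ := by
    rw [heq]
    exact rank3_le hdecV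
  omega

end Stmt2Aux

/-- Let `A₁, …, A_k` be `n × n` matrices over `F`.  The `[2n] × [2n] × [k+1]` tensor
whose first layer is the block matrix `[[Iₙ, 0], [0, Iₙ]]` and whose `(l+1)`-st layer is
`[[0, 0], [A_l, 0]]` has rank at least `rank([A₁|⋯|A_k]) + 2n`. -/
theorem stmt2 (F : Type*) [Field F] (n k : ℕ) (hn : 1 ≤ n) (hk : 1 ≤ k)
    (A : Fin k → Matrix (Fin n) (Fin n) F) :
    rank3 (fun (i j : Fin n) (l : Fin k) => A l i j) + 2 * n ≤
      rank3 (fun (i j : Fin (2 * n)) (l : Fin (k + 1)) =>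
        if hl : l = 0 then (if i = j then (1 : F) else 0)
        else if h : n ≤ (i : ℕ) ∧ (j : ℕ) < n then
          A (l.pred hl) ⟨(i : ℕ) - n, by have := i.isLt; omega⟩ ⟨(j : ℕ), h.2⟩
        else 0) := by
  apply Stmt2Aux.main n k A
  · intro i j
    rw [dif_pos rfl]
  · intro i j l hl hi hj i' j' hi' hj'
    rw [dif_neg hl, dif_pos ⟨hi, hj⟩]
    have e1 : (⟨(i : ℕ) - n, by have := i.isLt; omega⟩ : Fin n) = i' := by
      apply Fin.ext
      show (i : ℕ) - n = (i' : ℕ)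
      omega
    have e2 : (⟨(j : ℕ), hj⟩ : Fin n) = j' := by
      apply Fin.ext
      show (j : ℕ) = (j' : ℕ)
      omega
    rw [e1, e2]
  · intro i j l hl hcase
    rw [dif_neg hl, dif_neg]
    rintro ⟨h1, h2⟩
    rcases hcase with h | h
    · exact h h1
    · exact h h2
end

section
/- (Layer reduction.) Let F be a field, d ≥ 2, and let S_1,…,S_{n_d} : [n_1] × ⋯ × [n_{d−1}] → F be tensors with S_{n_d} nonzero. Then there exist constants c_1,…,c_{n_d−1} ∈ F such that rank_F([S_1|⋯|S_{n_d}]) ≥ rank_F([S_1 + c_1 S_{n_d}|⋯|S_{n_d−1} + c_{n_d−1} S_{n_d}]) + 1. -/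
/-- The tensor rank of an order-`(e+1)` tensor presented as `m` layers of an
order-`e` tensor of shape `[n 0] × ⋯ × [n (e-1)]`: the least `r` such that the
layered tensor is a sum of `r` simple tensors. -/
noncomputable def layeredRank (F : Type*) [Field F] {e : ℕ} {n : Fin e → ℕ} {m : ℕ}
    (T : ((j : Fin e) → Fin (n j)) → Fin m → F) : ℕ :=
  sInf {r : ℕ | ∃ (v : Fin r → (j : Fin e) → Fin (n j) → F) (w : Fin r → Fin m → F),
    ∀ i l, T i l = ∑ kk, (∏ j, v kk j (i j)) * w kk l}

lemma layeredRank_set_nonempty (F : Type*) [Field F] {e : ℕ} {n : Fin e → ℕ} {m : ℕ}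
    (T : ((j : Fin e) → Fin (n j)) → Fin m → F) :
    {r : ℕ | ∃ (v : Fin r → (j : Fin e) → Fin (n j) → F) (w : Fin r → Fin m → F),
      ∀ i l, T i l = ∑ kk, (∏ j, v kk j (i j)) * w kk l}.Nonempty := by
  classical
  set A := ((j : Fin e) → Fin (n j)) × Fin m
  obtain ⟨eqv⟩ : Nonempty (A ≃ Fin (Fintype.card A)) := ⟨Fintype.equivFin A⟩
  refine ⟨Fintype.card A,
    fun kk j x => if (eqv.symm kk).1 j = x then 1 else 0,
    fun kk l => if (eqv.symm kk).2 = l then T (eqv.symm kk).1 l else 0, ?_⟩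
  intro i l
  rw [← Equiv.sum_comp eqv]
  simp only [Equiv.symm_apply_apply]
  rw [Fintype.sum_prod_type]
  have key : ∀ a : (j : Fin e) → Fin (n j),
      (∑ b : Fin m, (∏ j, if a j = i j then (1:F) else 0) *
        (if b = l then T a l else 0)) =
      (if a = i then (1:F) else 0) * T a l := by
    intro a
    rw [← Finset.mul_sum, Finset.sum_ite_eq' Finset.univ l (fun _ => T a l)]
    simp only [Finset.mem_univ, if_true]
    congr 1
    rw [Finset.prod_boole]
    simp [funext_iff]
  simp only [key, ite_mul, one_mul, zero_mul]
  rw [Finset.sum_ite_eq' Finset.univ i (fun a => T a l)]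
  simp

lemma layer_reduce_aux (F : Type*) [Field F] {e : ℕ} {n : Fin e → ℕ} {m : ℕ}
    (S : Fin (m + 1) → ((j : Fin e) → Fin (n j)) → F)
    (hS : S (Fin.last m) ≠ 0) (r : ℕ)
    (v : Fin r → (j : Fin e) → Fin (n j) → F) (w : Fin r → Fin (m + 1) → F)
    (hvw : ∀ i l, S l i = ∑ kk, (∏ j, v kk j (i j)) * w kk l) :
    ∃ c : Fin m → F,
      layeredRank F (fun i l => S l.castSucc i + c l * S (Fin.last m) i) + 1 ≤ r := by
  classical
  have hi : ∃ i, S (Fin.last m) i ≠ 0 := by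
    by_contra h
    push_neg at h
    exact hS (funext h)
  obtain ⟨i0, hi0⟩ := hi
  have hk : ∃ k, (∏ j, v k j (i0 j)) * w k (Fin.last m) ≠ 0 := by
    by_contra h
    push_neg at h
    exact hi0 ((hvw i0 (Fin.last m)).trans (Finset.sum_eq_zero fun k _ => h k))
  obtain ⟨k0, hk0⟩ := hk
  have hw0 : w k0 (Fin.last m) ≠ 0 := right_ne_zero_of_mul hk0
  cases r with
  | zero => exact k0.elim0
  | succ r' =>
    set c : Fin m → F := fun l => - w k0 l.castSucc / w k0 (Fin.last m) with hc
    refine ⟨c, ?_⟩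
    have hle : layeredRank F (fun i l => S l.castSucc i + c l * S (Fin.last m) i) ≤ r' := by
      apply Nat.sInf_le
      refine ⟨fun k => v (k0.succAbove k),
        fun k l => w (k0.succAbove k) l.castSucc + c l * w (k0.succAbove k) (Fin.last m), ?_⟩
      intro i l
      beta_reduce
      rw [hvw i l.castSucc, hvw i (Fin.last m), Finset.mul_sum,
        Fin.sum_univ_succAbove (fun k => (∏ j, v k j (i j)) * w k l.castSucc) k0,
        Fin.sum_univ_succAbove
          (fun k => c l * ((∏ j, v k j (i j)) * w k (Fin.last m))) k0,
        add_add_add_comm]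
      have hcancel : (∏ j, v k0 j (i j)) * w k0 l.castSucc +
          c l * ((∏ j, v k0 j (i j)) * w k0 (Fin.last m)) = 0 := by
        rw [hc]
        field_simp
        ring
      rw [hcancel, zero_add, ← Finset.sum_add_distrib]
      exact Finset.sum_congr rfl fun k _ => by ring
    exact Nat.succ_le_succ hle

/-- Layer reduction: if `S 0, …, S m` are the layers (along the last axis) of an
order-`(e+1)` tensor (`e ≥ 1`, so the order `d = e + 1` is at least 2) and the
last layer `S m` is nonzero, then there exist constants `c₁, …, c_m ∈ F` with
`rank [S₀ + c₀·Sₘ | ⋯ | S_{m-1} + c_{m-1}·Sₘ] + 1 ≤ rank [S₀ | ⋯ | Sₘ]`. -/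
theorem stmt3 (F : Type*) [Field F] (e : ℕ) (he : 1 ≤ e) (n : Fin e → ℕ) (m : ℕ)
    (S : Fin (m + 1) → ((j : Fin e) → Fin (n j)) → F)
    (hS : S (Fin.last m) ≠ 0) :
    ∃ c : Fin m → F,
      layeredRank F (fun i l => S l.castSucc i + c l * S (Fin.last m) i) + 1 ≤
        layeredRank F (fun i l => S l i) := by
  obtain ⟨v, w, hvw⟩ := Nat.sInf_mem (layeredRank_set_nonempty F (fun i l => S l i))
  exact layer_reduce_aux F S hS _ v w hvw
end

section
/- There is an absolute constant c > 0 such that for every finite field F there is an N so that for all n ≥ N there exists a permutation tensor T : [n]^3 → F with rank_F(T) ≥ c · n · (log n)/(log |F|). -/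
open Finset

attribute [local instance] Classical.propDecidable

noncomputable def SDRs {ι β : Type*} [DecidableEq β] (s : Finset ι) (A : ι → Finset β) :
    Finset (∀ i ∈ s, β) :=
  (s.pi A).filter (fun f => ∀ i hi j hj, f i hi = f j hj → i = j)

lemma mem_SDRs {ι β : Type*} [DecidableEq β] {s : Finset ι} {A : ι → Finset β}
    {f : ∀ i ∈ s, β} :
    f ∈ SDRs s A ↔ (∀ i hi, f i hi ∈ A i) ∧ ∀ i hi j hj, f i hi = f j hj → i = j := by
  simp [SDRs, Finset.mem_pi]

lemma sdr_nonempty {ι β : Type*} [DecidableEq β] (s : Finset ι) (A : ι → Finset β)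
    (hall : ∀ t ⊆ s, t.card ≤ (t.biUnion A).card) : (SDRs s A).Nonempty := by
  have hall' : ∀ t : Finset {x // x ∈ s}, t.card ≤ (t.biUnion fun i => A i.1).card := by
    intro t
    have hsub : (t.image Subtype.val) ⊆ s := by
      intro x hx
      obtain ⟨y, _, rfl⟩ := Finset.mem_image.mp hx
      exact y.2
    calc t.card = (t.image Subtype.val).card :=
          (Finset.card_image_of_injective _ Subtype.val_injective).symm
      _ ≤ ((t.image Subtype.val).biUnion A).card := hall _ hsub
      _ = (t.biUnion fun i => A i.1).card := by
          congr 1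
          ext x
          simp [Finset.mem_biUnion]
  obtain ⟨f, hfinj, hfm⟩ := (Finset.all_card_le_biUnion_card_iff_exists_injective
      (fun i : {x // x ∈ s} => A i.1)).mp hall'
  refine ⟨fun i hi => f ⟨i, hi⟩, ?_⟩
  rw [mem_SDRs]
  refine ⟨fun i hi => hfm ⟨i, hi⟩, fun i hi j hj h => ?_⟩
  exact congrArg Subtype.val (hfinj h)

theorem sdr_count {ι β : Type*} [DecidableEq ι] [DecidableEq β] (s : Finset ι) :
    ∀ (A : ι → Finset β) (r : ℕ),
      (∀ t ⊆ s, t.card ≤ (t.biUnion A).card) →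
      (∀ i ∈ s, r ≤ (A i).card) → r ≤ s.card →
      r.factorial ≤ (SDRs s A).card := by
  induction s using Finset.strongInduction with
  | _ s ih =>
    intro A r hall hsize hr
    match r with
    | 0 => simpa using Finset.card_pos.mpr (sdr_nonempty s A hall)
    | (r+1) =>
      by_cases hcase : ∃ t ⊆ s, t.Nonempty ∧ t ≠ s ∧ (t.biUnion A).card ≤ t.card
      · -- Case A : a tight set t
        obtain ⟨t, hts, htne, htnes, htight⟩ := hcase
        have htss : t ⊂ s := Finset.ssubset_iff_subset_ne.mpr ⟨hts, htnes⟩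
        obtain ⟨i0, hi0⟩ := htne
        have hrt : r + 1 ≤ t.card := by
          calc r + 1 ≤ (A i0).card := hsize i0 (hts hi0)
            _ ≤ (t.biUnion A).card :=
                Finset.card_le_card (Finset.subset_biUnion_of_mem A hi0)
            _ ≤ t.card := htight
        have hfact : (r+1).factorial ≤ (SDRs t A).card :=
          ih t htss A (r+1) (fun u hu => hall u (hu.trans hts))
            (fun i hi => hsize i (hts hi)) hrt
        -- the rest s \ t with shrunk sets
        set A' : ι → Finset β := fun i => A i \ t.biUnion A with hA'
        have hallrest : ∀ v ⊆ s \ t, v.card ≤ (v.biUnion A').card := by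
          intro v hv
          have hdisj : Disjoint t v := by
            refine Finset.disjoint_left.mpr fun a hat hav => ?_
            exact (Finset.mem_sdiff.mp (hv hav)).2 hat
          have h1 : (t ∪ v).card ≤ ((t ∪ v).biUnion A).card :=
            hall _ (Finset.union_subset hts ((hv.trans (Finset.sdiff_subset))))
          have h2 : (t ∪ v).biUnion A ⊆ t.biUnion A ∪ v.biUnion A' := by
            intro x hx
            rw [Finset.mem_biUnion] at hx
            obtain ⟨i, hi, hxi⟩ := hx
            rcases Finset.mem_union.mp hi with hi | hi
            · exact Finset.mem_union_left _ (Finset.mem_biUnion.mpr ⟨i, hi, hxi⟩)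
            · by_cases hxt : x ∈ t.biUnion A
              · exact Finset.mem_union_left _ hxt
              · refine Finset.mem_union_right _ (Finset.mem_biUnion.mpr ⟨i, hi, ?_⟩)
                exact Finset.mem_sdiff.mpr ⟨hxi, hxt⟩
          have h3 : t.card + v.card ≤ t.card + (v.biUnion A').card := by
            calc t.card + v.card = (t ∪ v).card := (Finset.card_union_of_disjoint hdisj).symm
              _ ≤ ((t ∪ v).biUnion A).card := h1
              _ ≤ (t.biUnion A ∪ v.biUnion A').card := Finset.card_le_card h2
              _ ≤ (t.biUnion A).card + (v.biUnion A').card := Finset.card_union_le _ _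
              _ ≤ t.card + (v.biUnion A').card := by
                  exact Nat.add_le_add_right htight _
          exact Nat.le_of_add_le_add_left h3
        obtain ⟨g, hg⟩ := sdr_nonempty (s \ t) A' hallrest
        rw [mem_SDRs] at hg
        -- combine
        have hcomb : ∀ f ∈ SDRs t A,
            (fun i (hi : i ∈ s) => if h : i ∈ t then f i h
              else g i (Finset.mem_sdiff.mpr ⟨hi, h⟩)) ∈ SDRs s A := by
          intro f hf
          rw [mem_SDRs] at hf ⊢
          constructor
          · intro i hi
            by_cases h : i ∈ t
            · simpa [h] using hf.1 i h
            · simp only [dif_neg h]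
              exact Finset.mem_sdiff.mp (hg.1 i (Finset.mem_sdiff.mpr ⟨hi, h⟩)) |>.1
          · intro i hi j hj heq
            by_cases h1 : i ∈ t <;> by_cases h2 : j ∈ t
            · rw [dif_pos h1, dif_pos h2] at heq
              exact hf.2 i h1 j h2 heq
            · rw [dif_pos h1, dif_neg h2] at heq
              exfalso
              have hmem : f i h1 ∈ t.biUnion A := Finset.mem_biUnion.mpr ⟨i, h1, hf.1 i h1⟩
              have := (Finset.mem_sdiff.mp (hg.1 j (Finset.mem_sdiff.mpr ⟨hj, h2⟩))).2
              exact this (heq ▸ hmem)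
            · rw [dif_neg h1, dif_pos h2] at heq
              exfalso
              have hmem : f j h2 ∈ t.biUnion A := Finset.mem_biUnion.mpr ⟨j, h2, hf.1 j h2⟩
              have := (Finset.mem_sdiff.mp (hg.1 i (Finset.mem_sdiff.mpr ⟨hi, h1⟩))).2
              exact this (heq ▸ hmem)
            · rw [dif_neg h1, dif_neg h2] at heq
              exact hg.2 i _ j _ heq
        have hinj : (SDRs t A).card ≤ (SDRs s A).card := by
          apply Finset.card_le_card_of_injOn
            (fun f i (hi : i ∈ s) => if h : i ∈ t then f i h
              else g i (Finset.mem_sdiff.mpr ⟨hi, h⟩)) (by intro f hf; exact hcomb f hf)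
          intro f1 h1 f2 h2 heq
          funext i hi
          have := congrFun (congrFun heq i) (hts hi)
          simpa [dif_pos hi] using this
        exact hfact.trans hinj
      · -- Case B : no tight proper subset
        push_neg at hcase
        have hsne : s.Nonempty := Finset.card_pos.mp (Nat.lt_of_lt_of_le (Nat.succ_pos r) hr)
        obtain ⟨i0, hi0⟩ := hsne
        set A2 : β → ι → Finset β := fun x i => A i \ {x} with hA2
        have hIH : ∀ x ∈ A i0, r.factorial ≤ (SDRs (s.erase i0) (A2 x)).card := by
          intro x hx
          apply ih (s.erase i0) (Finset.erase_ssubset hi0)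
          · -- hall
            intro v hv
            rcases v.eq_empty_or_nonempty with rfl | hvne
            · simp
            · have hvs : v ⊆ s := hv.trans (Finset.erase_subset _ _)
              have hvns : v ≠ s := by
                intro h
                exact (Finset.mem_erase.mp (hv (h ▸ hi0))).1 rfl
              have hlt : v.card < (v.biUnion A).card := hcase v hvs hvne hvns
              have hsub : v.biUnion A ⊆ v.biUnion (A2 x) ∪ {x} := by
                intro y hy
                obtain ⟨i, hiv, hyi⟩ := Finset.mem_biUnion.mp hy
                by_cases hyx : y = x
                · exact Finset.mem_union_right _ (by simp [hyx])
                · exact Finset.mem_union_left _ (Finset.mem_biUnion.mpr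
                    ⟨i, hiv, Finset.mem_sdiff.mpr ⟨hyi, by simp [hyx]⟩⟩)
              have : (v.biUnion A).card ≤ (v.biUnion (A2 x)).card + 1 := by
                calc (v.biUnion A).card ≤ (v.biUnion (A2 x) ∪ {x}).card :=
                      Finset.card_le_card hsub
                  _ ≤ (v.biUnion (A2 x)).card + 1 := by
                      simpa using Finset.card_union_le (v.biUnion (A2 x)) {x}
              omega
          · -- sizes
            intro i hi
            simp only [hA2]
            have h1 : r + 1 ≤ (A i).card := hsize i (Finset.mem_of_mem_erase hi)
            have h2 : (A i).card ≤ (A i \ {x}).card + 1 := by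
              calc (A i).card ≤ ((A i \ {x}) ∪ {x}).card := Finset.card_le_card (by
                    intro y hy
                    by_cases hyx : y = x
                    · exact Finset.mem_union_right _ (by simp [hyx])
                    · exact Finset.mem_union_left _ (Finset.mem_sdiff.mpr ⟨hy, by simp [hyx]⟩))
                _ ≤ (A i \ {x}).card + 1 := by
                    simpa using Finset.card_union_le (A i \ {x}) {x}
            omega
          · rw [Finset.card_erase_of_mem hi0]
            omega
        -- assemble via sigma
        set D := (A i0).sigma (fun x => SDRs (s.erase i0) (A2 x)) with hD
        have hDcard : (r+1).factorial ≤ D.card := by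
          rw [hD, Finset.card_sigma]
          calc (r+1).factorial = (r+1) * r.factorial := rfl
            _ ≤ (A i0).card * r.factorial :=
                Nat.mul_le_mul_right _ (hsize i0 hi0)
            _ = ∑ _x ∈ A i0, r.factorial := by rw [Finset.sum_const, smul_eq_mul]
            _ ≤ ∑ x ∈ A i0, (SDRs (s.erase i0) (A2 x)).card :=
                Finset.sum_le_sum hIH
        have hmap : D.card ≤ (SDRs s A).card := by
          apply Finset.card_le_card_of_injOn
            (fun p i (hi : i ∈ s) => if h : i = i0 then p.1
              else p.2 i (Finset.mem_erase.mpr ⟨h, hi⟩))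
          · rintro ⟨x, g⟩ hp
            obtain ⟨hx, hgm⟩ := Finset.mem_sigma.mp hp
            rw [mem_SDRs] at hgm; rw [Finset.mem_coe, mem_SDRs]; beta_reduce
            constructor
            · intro i hi
              by_cases h : i = i0
              · subst h; simpa using hx
              · simp only [dif_neg h]
                exact (Finset.mem_sdiff.mp (hgm.1 i (Finset.mem_erase.mpr ⟨h, hi⟩))).1
            · intro i hi j hj heq
              by_cases h1 : i = i0 <;> by_cases h2 : j = i0
              · rw [h1, h2]
              · rw [dif_pos h1, dif_neg h2] at heq
                exfalso
                have := (Finset.mem_sdiff.mp (hgm.1 j (Finset.mem_erase.mpr ⟨h2, hj⟩))).2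
                simp only [Finset.mem_singleton] at this
                exact this heq.symm
              · rw [dif_neg h1, dif_pos h2] at heq
                exfalso
                have := (Finset.mem_sdiff.mp (hgm.1 i (Finset.mem_erase.mpr ⟨h1, hi⟩))).2
                simp only [Finset.mem_singleton] at this
                exact this heq
              · rw [dif_neg h1, dif_neg h2] at heq
                exact hgm.2 i _ j _ heq
          · rintro ⟨x, g⟩ hp ⟨x', g'⟩ hp' heq
            have hx : x = x' := by
              have := congrFun (congrFun heq i0) hi0
              simpa using this
            subst hx
            have hg : g = g' := by
              funext i hi
              have hine : i ≠ i0 := (Finset.mem_erase.mp hi).1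
              have his : i ∈ s := Finset.mem_of_mem_erase hi
              have := congrFun (congrFun heq i) his
              simpa [dif_neg hine] using this
            rw [hg]
        exact hDcard.trans hmap

/-! ### Latin rectangles -/

def IsLR {n k : ℕ} (L : Fin k → Fin n → Fin n) : Prop :=
  (∀ i, Function.Injective (L i)) ∧ (∀ j, Function.Injective (fun i => L i j))

noncomputable def LRset (n k : ℕ) : Finset (Fin k → Fin n → Fin n) :=
  Finset.univ.filter IsLR

noncomputable def Avail {n k : ℕ} (R : Fin k → Fin n → Fin n) (j : Fin n) : Finset (Fin n) :=
  Finset.univ.filter (fun x => ∀ i, R i j ≠ x)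

lemma avail_card {n k : ℕ} {R : Fin k → Fin n → Fin n} (hR : IsLR R) (j : Fin n) :
    (Avail R j).card = n - k := by
  have : Avail R j = Finset.univ \ Finset.univ.image (fun i => R i j) := by
    ext x
    simp [Avail, eq_comm]
  rw [this, Finset.card_sdiff_of_subset (Finset.subset_univ _), Finset.card_image_of_injective _ (hR.2 j)]
  simp

lemma avail_deg {n k : ℕ} {R : Fin k → Fin n → Fin n} (hR : IsLR R) (x : Fin n) :
    (Finset.univ.filter (fun j => x ∈ Avail R j)).card ≤ n - k := by
  have hsurj : ∀ i, Function.Surjective (R i) := by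
    intro i
    exact Finite.surjective_of_injective (hR.1 i)
  -- each row contains x in a distinct column
  set J : Fin k → Fin n := fun i => Classical.choose (hsurj i x) with hJ
  have hJx : ∀ i, R i (J i) = x := fun i => Classical.choose_spec (hsurj i x)
  have hJinj : Function.Injective J := by
    intro i1 i2 h
    apply hR.2 (J i1)
    show R i1 (J i1) = R i2 (J i1)
    rw [hJx i1, h, hJx i2]
  have hk : k ≤ (Finset.univ.filter (fun j => ¬ x ∈ Avail R j)).card := by
    have h2 : (Finset.univ : Finset (Fin k)).card ≤
        (Finset.univ.filter (fun j => ¬ x ∈ Avail R j)).card := by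
      apply Finset.card_le_card_of_injOn J
      · intro i _
        simp only [Finset.mem_coe, Finset.mem_filter, Finset.mem_univ, true_and, Avail, not_forall, not_not]
        exact ⟨i, hJx i⟩
      · exact fun i1 _ i2 _ h => hJinj h
    simpa using h2
  have htot := Finset.card_filter_add_card_filter_not
    (s := (Finset.univ : Finset (Fin n))) (p := fun j => x ∈ Avail R j)
  simp only [Finset.card_univ, Fintype.card_fin] at htot
  omega

lemma avail_hall {n k : ℕ} {R : Fin k → Fin n → Fin n} (hR : IsLR R) (hkn : k < n) :
    ∀ t ⊆ (Finset.univ : Finset (Fin n)), t.card ≤ (t.biUnion (Avail R)).card := by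
  intro t _
  have key : (n - k) * t.card ≤ (n - k) * (t.biUnion (Avail R)).card := by
    calc (n - k) * t.card = ∑ j ∈ t, (Avail R j).card := by
          rw [Finset.sum_congr rfl (fun j _ => avail_card hR j)]
          simp [mul_comm]
      _ = ∑ j ∈ t, ∑ x ∈ t.biUnion (Avail R), (if x ∈ Avail R j then 1 else 0) := by
          apply Finset.sum_congr rfl
          intro j hj
          simp only [Finset.sum_boole, Nat.cast_id]
          rw [Finset.filter_mem_eq_inter, Finset.inter_eq_right.mpr
            (Finset.subset_biUnion_of_mem (Avail R) hj)]
      _ = ∑ x ∈ t.biUnion (Avail R), ∑ j ∈ t, (if x ∈ Avail R j then 1 else 0) :=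
          Finset.sum_comm
      _ ≤ ∑ _x ∈ t.biUnion (Avail R), (n - k) := by
          apply Finset.sum_le_sum
          intro x _
          calc ∑ j ∈ t, (if x ∈ Avail R j then 1 else 0)
              = (t.filter (fun j => x ∈ Avail R j)).card := by
                simp [Finset.sum_boole]
            _ ≤ (Finset.univ.filter (fun j => x ∈ Avail R j)).card :=
                Finset.card_le_card (Finset.filter_subset_filter _ (Finset.subset_univ t))
            _ ≤ n - k := avail_deg hR x
      _ = (t.biUnion (Avail R)).card * (n - k) := by
          rw [Finset.sum_const, smul_eq_mul]
      _ = (n - k) * (t.biUnion (Avail R)).card := mul_comm _ _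
  exact Nat.le_of_mul_le_mul_left key (by omega)

noncomputable def dropRow {n k : ℕ} (L : Fin (k+1) → Fin n → Fin n) : Fin k → Fin n → Fin n :=
  fun i => L i.castSucc

noncomputable def extRow {n k : ℕ} (R : Fin k → Fin n → Fin n)
    (f : ∀ j ∈ (Finset.univ : Finset (Fin n)), Fin n) : Fin (k+1) → Fin n → Fin n :=
  fun i => Fin.lastCases (motive := fun _ => Fin n → Fin n)
    (fun j => f j (Finset.mem_univ j)) (fun i' => R i') i

lemma drop_mem {n k : ℕ} {L : Fin (k+1) → Fin n → Fin n} (hL : IsLR L) : IsLR (dropRow L) := by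
  constructor
  · intro i
    exact hL.1 i.castSucc
  · intro j
    exact fun i1 i2 h => Fin.castSucc_injective k (hL.2 j h)

lemma ext_mem {n k : ℕ} {R : Fin k → Fin n → Fin n} (hR : IsLR R)
    {f : ∀ j ∈ (Finset.univ : Finset (Fin n)), Fin n} (hf : f ∈ SDRs Finset.univ (Avail R)) :
    IsLR (extRow R f) ∧ dropRow (extRow R f) = R := by
  rw [mem_SDRs] at hf
  have havail : ∀ j, f j (Finset.mem_univ j) ∈ Avail R j := fun j => hf.1 j _
  have hne : ∀ j i, R i j ≠ f j (Finset.mem_univ j) := by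
    intro j i
    have := havail j
    simp only [Avail, Finset.mem_filter] at this
    exact this.2 i
  have hcast : ∀ (i : Fin k) (j : Fin n), extRow R f i.castSucc j = R i j := by
    intro i j
    simp [extRow]
  have hlast : ∀ (j : Fin n), extRow R f (Fin.last k) j = f j (Finset.mem_univ j) := by
    intro j
    simp [extRow]
  refine ⟨⟨?_, ?_⟩, ?_⟩
  · intro i
    rcases Fin.eq_castSucc_or_eq_last i with ⟨i', rfl⟩ | rfl
    · intro j1 j2 h
      rw [hcast, hcast] at h
      exact hR.1 i' h
    · intro j1 j2 h
      rw [hlast, hlast] at h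
      exact hf.2 j1 _ j2 _ h
  · intro j i1 i2 h
    rcases Fin.eq_castSucc_or_eq_last i1 with ⟨i1', rfl⟩ | rfl <;>
      rcases Fin.eq_castSucc_or_eq_last i2 with ⟨i2', rfl⟩ | rfl
    · simp only [hcast] at h
      exact congrArg Fin.castSucc (hR.2 j h)
    · simp only [hcast, hlast] at h
      exact absurd h (hne j i1')
    · simp only [hcast, hlast] at h
      exact absurd h.symm (hne j i2')
    · rfl
  · funext i j
    exact hcast i j

lemma LR_step {n k : ℕ} (hkn : k < n) :
    (n - k).factorial * (LRset n k).card ≤ (LRset n (k+1)).card := by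
  have hdrop : ∀ L ∈ LRset n (k+1), dropRow L ∈ LRset n k := by
    intro L hL
    simp only [LRset, Finset.mem_filter, Finset.mem_univ, true_and] at hL ⊢
    exact drop_mem hL
  rw [Finset.card_eq_sum_card_fiberwise hdrop]
  have hfiber : ∀ R ∈ LRset n k,
      (n - k).factorial ≤ ((LRset n (k+1)).filter (fun L => dropRow L = R)).card := by
    intro R hRm
    have hR : IsLR R := by
      simpa [LRset] using hRm
    have hsdr : (n - k).factorial ≤ (SDRs (Finset.univ : Finset (Fin n)) (Avail R)).card := by
      apply sdr_count
      · exact avail_hall hR hkn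
      · intro j _
        rw [avail_card hR j]
      · simp
    refine hsdr.trans ?_
    apply Finset.card_le_card_of_injOn (fun f => extRow R f)
    · intro f hf
      obtain ⟨hlr, hdr⟩ := ext_mem hR hf
      simp only [Finset.mem_coe, Finset.mem_filter, LRset, Finset.mem_univ, true_and]
      exact ⟨hlr, hdr⟩
    · intro f1 _ f2 _ heq
      funext j hj
      have := congrFun (congrFun heq (Fin.last k)) j
      simpa [extRow] using this
  calc (n - k).factorial * (LRset n k).card = ∑ _R ∈ LRset n k, (n - k).factorial := by
        rw [Finset.sum_const, smul_eq_mul, mul_comm]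
    _ ≤ ∑ R ∈ LRset n k, ((LRset n (k+1)).filter (fun L => dropRow L = R)).card :=
        Finset.sum_le_sum hfiber

lemma LR_count (n : ℕ) : ∀ k, k ≤ n →
    (∏ i ∈ Finset.range k, (n - i).factorial) ≤ (LRset n k).card := by
  intro k
  induction k with
  | zero =>
    intro _
    have : (fun i : Fin 0 => i.elim0 : Fin 0 → Fin n → Fin n) ∈ LRset n 0 := by
      simp only [LRset, Finset.mem_filter, Finset.mem_univ, true_and]
      exact ⟨fun i => i.elim0, fun j i1 => i1.elim0⟩
    simpa using Finset.card_pos.mpr ⟨_, this⟩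
  | succ k ihk =>
    intro hk
    have hkn : k < n := hk
    calc (∏ i ∈ Finset.range (k+1), (n - i).factorial)
        = (n - k).factorial * (∏ i ∈ Finset.range k, (n - i).factorial) := by
          rw [Finset.prod_range_succ, mul_comm]
      _ ≤ (n - k).factorial * (LRset n k).card :=
          Nat.mul_le_mul_left _ (ihk (le_of_lt hkn))
      _ ≤ (LRset n (k+1)).card := LR_step hkn

/-- An order-3 permutation tensor: a 0/1-valued tensor `T : [n]³ → F` such that along
every axis, for every fixing of the other two coordinates, exactly one entry equals 1. -/
def IsPermutationTensor3 {F : Type*} [Field F] {n : ℕ}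
    (T : Fin n → Fin n → Fin n → F) : Prop :=
  (∀ i j k, T i j k = 0 ∨ T i j k = 1) ∧
  (∀ j k, ∃! i, T i j k = 1) ∧
  (∀ i k, ∃! j, T i j k = 1) ∧
  (∀ i j, ∃! k, T i j k = 1)


/-! ### Permutation tensors from Latin squares -/

noncomputable def toTensor {F : Type} [Field F] {n : ℕ} (L : Fin n → Fin n → Fin n) :
    Fin n → Fin n → Fin n → F := fun i j k => if L i j = k then 1 else 0

lemma ite_one_eq_one {F : Type} [Field F] {P : Prop} [Decidable P] :
    ((if P then (1:F) else 0) = 1) ↔ P := by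
  split <;> simp_all

lemma toTensor_perm {F : Type} [Field F] {n : ℕ} {L : Fin n → Fin n → Fin n}
    (hL : IsLR L) : IsPermutationTensor3 (toTensor (F := F) L) := by
  have hrow : ∀ i, Function.Bijective (L i) :=
    fun i => Finite.injective_iff_bijective.mp (hL.1 i)
  have hcol : ∀ j, Function.Bijective (fun i => L i j) :=
    fun j => Finite.injective_iff_bijective.mp (hL.2 j)
  refine ⟨fun i j k => ?_, fun j k => ?_, fun i k => ?_, fun i j => ?_⟩
  · unfold toTensor; split <;> simp
  · obtain ⟨i, hi⟩ := (hcol j).2 k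
    refine ⟨i, ?_, ?_⟩
    · simpa [toTensor, ite_one_eq_one] using hi
    · intro i' hi'
      rw [toTensor, ite_one_eq_one] at hi'
      exact (hcol j).1 (hi'.trans hi.symm)
  · obtain ⟨j, hj⟩ := (hrow i).2 k
    refine ⟨j, ?_, ?_⟩
    · simpa [toTensor, ite_one_eq_one] using hj
    · intro j' hj'
      rw [toTensor, ite_one_eq_one] at hj'
      exact (hrow i).1 (hj'.trans hj.symm)
  · refine ⟨L i j, ?_, ?_⟩
    · simp [toTensor]
    · intro k' hk'
      rw [toTensor, ite_one_eq_one] at hk'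
      exact hk'.symm

lemma toTensor_inj {F : Type} [Field F] {n : ℕ} : Function.Injective (toTensor (F := F) (n := n)) := by
  intro L1 L2 h
  funext i j
  have := congrFun (congrFun (congrFun h i) j) (L1 i j)
  simp only [toTensor, if_pos rfl] at this
  have := (ite_one_eq_one (F := F)).mp this.symm
  exact this.symm

/-! ### Rank decompositions -/

lemma rank3_mem {F : Type} [Field F] {n : ℕ} (T : Fin n → Fin n → Fin n → F) :
    ∃ (a : Fin (rank3 T) → Fin n → F) (b : Fin (rank3 T) → Fin n → F)
      (c : Fin (rank3 T) → Fin n → F), ∀ i j k, T i j k = ∑ l, a l i * b l j * c l k := by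
  have hne : ∃ r, r ∈ {r : ℕ | ∃ (a : Fin r → Fin n → F) (b : Fin r → Fin n → F)
      (c : Fin r → Fin n → F), ∀ i j k, T i j k = ∑ l, a l i * b l j * c l k} := by
    refine ⟨n * n, fun l i => T i (finProdFinEquiv.symm l).1 (finProdFinEquiv.symm l).2,
      fun l j => if (finProdFinEquiv.symm l).1 = j then 1 else 0,
      fun l k => if (finProdFinEquiv.symm l).2 = k then 1 else 0, fun i j k => ?_⟩
    rw [← Equiv.sum_comp (finProdFinEquiv (m := n) (n := n))]
    simp only [Equiv.symm_apply_apply]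
    rw [Fintype.sum_prod_type]
    simp [mul_ite, ite_mul, Finset.sum_ite_eq', Finset.sum_ite_eq]
  exact Nat.sInf_mem hne

lemma rank3_decomp {F : Type} [Field F] {n : ℕ} (T : Fin n → Fin n → Fin n → F) (r : ℕ)
    (h : rank3 T ≤ r) :
    ∃ (a : Fin r → Fin n → F) (b : Fin r → Fin n → F) (c : Fin r → Fin n → F),
      ∀ i j k, T i j k = ∑ l, a l i * b l j * c l k := by
  obtain ⟨a, b, c, habc⟩ := rank3_mem T
  refine ⟨fun l i => if hl : (l : ℕ) < rank3 T then a ⟨l, hl⟩ i else 0,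
    fun l j => if hl : (l : ℕ) < rank3 T then b ⟨l, hl⟩ j else 0,
    fun l k => if hl : (l : ℕ) < rank3 T then c ⟨l, hl⟩ k else 0, fun i j k => ?_⟩
  rw [habc i j k]
  have hsub : (Finset.univ : Finset (Fin (rank3 T))).map (Fin.castLEEmb h) ⊆ Finset.univ :=
    Finset.subset_univ _
  rw [← Finset.sum_subset hsub]
  · rw [Finset.sum_map]
    apply Finset.sum_congr rfl
    intro l _
    have hlm : ((Fin.castLEEmb h l : Fin r) : ℕ) < rank3 T := by
      simpa [Fin.castLEEmb] using l.2
    have hfin : (⟨((Fin.castLEEmb h l : Fin r) : ℕ), hlm⟩ : Fin (rank3 T)) = l :=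
      Fin.ext (by simp [Fin.castLEEmb])
    simp only [dif_pos hlm, hfin]
  · intro x _ hx
    have hxm : ¬ ((x : ℕ) < rank3 T) := by
      intro hc
      exact hx (Finset.mem_map.mpr ⟨⟨(x : ℕ), hc⟩, Finset.mem_univ _, Fin.ext (by simp)⟩)
    simp only [dif_neg hxm]
    ring

/-! ### Counting low-rank tensors -/

lemma count_bound {F : Type} [Field F] [Fintype F] {n r : ℕ}
    (hrank : ∀ L ∈ LRset n n, rank3 (toTensor (F := F) L) ≤ r) :
    (LRset n n).card ≤ (Fintype.card F) ^ (3 * (n * r)) := by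
  classical
  set Φ : ((Fin r → Fin n → F) × (Fin r → Fin n → F) × (Fin r → Fin n → F)) →
      (Fin n → Fin n → Fin n → F) :=
    fun p i j k => ∑ l, p.1 l i * p.2.1 l j * p.2.2 l k with hΦ
  have himg : (LRset n n).image (toTensor (F := F)) ⊆ Finset.univ.image Φ := by
    intro T hT
    obtain ⟨L, hL, rfl⟩ := Finset.mem_image.mp hT
    obtain ⟨a, b, c, habc⟩ := rank3_decomp (toTensor (F := F) L) r (hrank L hL)
    refine Finset.mem_image.mpr ⟨(a, b, c), Finset.mem_univ _, ?_⟩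
    funext i j k
    exact (habc i j k).symm
  calc (LRset n n).card = ((LRset n n).image (toTensor (F := F))).card :=
        (Finset.card_image_of_injective _ toTensor_inj).symm
    _ ≤ (Finset.univ.image Φ).card := Finset.card_le_card himg
    _ ≤ (Finset.univ : Finset ((Fin r → Fin n → F) × (Fin r → Fin n → F) ×
          (Fin r → Fin n → F))).card := Finset.card_image_le
    _ = (Fintype.card F) ^ (3 * (n * r)) := by
        rw [Finset.card_univ, Fintype.card_prod, Fintype.card_prod]
        simp only [Fintype.card_fun, Fintype.card_fin]
        ring

/-! ### Analytic lower bound on the number of Latin squares -/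

lemma prod_fact_lower {n : ℕ} (hn : 256 ≤ n) :
    (n:ℝ)^2 * Real.log n / 128 ≤
      Real.log ((∏ i ∈ Finset.range n, (n - i).factorial : ℕ) : ℝ) := by
  set m := n / 2 with hm
  set m2 := m / 2 with hm2
  have h1 : ((m2+1) ^ m2) ^ m ≤ ∏ i ∈ Finset.range n, (n - i).factorial := by
    calc ((m2+1) ^ m2) ^ m = ∏ _i ∈ Finset.range m, (m2+1) ^ m2 := by
          rw [Finset.prod_const, Finset.card_range]
      _ ≤ ∏ i ∈ Finset.range m, (n - i).factorial := by
          apply Finset.prod_le_prod'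
          intro i hi
          have him : i < m := Finset.mem_range.mp hi
          have hmni : m ≤ n - i := by omega
          calc (m2+1) ^ m2 ≤ m2.factorial * (m2+1) ^ m2 :=
                Nat.le_mul_of_pos_left _ m2.factorial_pos
            _ ≤ (m2 + m2).factorial := Nat.factorial_mul_pow_le_factorial
            _ ≤ m.factorial := Nat.factorial_le (by omega)
            _ ≤ (n - i).factorial := Nat.factorial_le hmni
      _ ≤ ∏ i ∈ Finset.range n, (n - i).factorial := by
          apply Finset.prod_le_prod_of_subset_of_one_le'
          · exact Finset.range_subset_range.mpr (by omega)
          · intro i _ _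
            exact (n - i).factorial_pos
  have hlog := Real.log_le_log (by positivity) (show ((((m2+1) ^ m2) ^ m : ℕ) : ℝ) ≤
      ((∏ i ∈ Finset.range n, (n - i).factorial : ℕ) : ℝ) by exact_mod_cast h1)
  have hlhs : Real.log ((((m2+1) ^ m2) ^ m : ℕ) : ℝ) =
      (m : ℝ) * ((m2 : ℝ) * Real.log ((m2 : ℝ) + 1)) := by
    push_cast
    rw [Real.log_pow, Real.log_pow]
  rw [hlhs] at hlog
  have h4 : (n:ℝ)/4 ≤ (m:ℝ) := by
    have : n ≤ 4 * m := by omega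
    have := (Nat.cast_le (α := ℝ)).mpr this
    push_cast at this
    linarith
  have h16 : (n:ℝ)/16 ≤ (m2:ℝ) := by
    have : n ≤ 16 * m2 := by omega
    have := (Nat.cast_le (α := ℝ)).mpr this
    push_cast at this
    linarith
  have hn256 : (256:ℝ) ≤ (n:ℝ) := by exact_mod_cast hn
  have hlogn : (0:ℝ) ≤ Real.log n := Real.log_nonneg (by linarith)
  have hlogm2 : (1/2) * Real.log n ≤ Real.log ((m2:ℝ) + 1) := by
    have hdiv : (n:ℝ)/16 ≤ (m2:ℝ) + 1 := by linarith
    have h1 : Real.log ((n:ℝ)/16) ≤ Real.log ((m2:ℝ)+1) :=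
      Real.log_le_log (by linarith) hdiv
    have h2 : Real.log ((n:ℝ)/16) = Real.log n - Real.log 16 := by
      rw [Real.log_div (by linarith) (by norm_num)]
    have h3 : Real.log 16 ≤ (1/2) * Real.log n := by
      have h256 : Real.log 256 ≤ Real.log n := Real.log_le_log (by norm_num) hn256
      have h162 : (256:ℝ) = 16^2 := by norm_num
      rw [h162, Real.log_pow] at h256
      push_cast at h256
      linarith
    linarith
  have key : ((n:ℝ)/4) * (((n:ℝ)/16) * ((1/2) * Real.log n)) ≤
      (m : ℝ) * ((m2 : ℝ) * Real.log ((m2 : ℝ) + 1)) := by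
    gcongr
  calc (n:ℝ)^2 * Real.log n / 128 = ((n:ℝ)/4) * (((n:ℝ)/16) * ((1/2) * Real.log n)) := by
        ring
    _ ≤ (m : ℝ) * ((m2 : ℝ) * Real.log ((m2 : ℝ) + 1)) := key
    _ ≤ _ := hlog

/-- There is an absolute constant `c > 0` such that for every finite field `F` there is
`N` so that for all `n ≥ N` there exists an order-3 permutation tensor `T : [n]³ → F`
with `rank_F(T) ≥ c · n · (log n)/(log |F|)`. -/
theorem stmt5 : ∃ c : ℝ, 0 < c ∧ ∀ (F : Type) [Field F] [Fintype F], ∃ N : ℕ,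
    ∀ n : ℕ, N ≤ n → ∃ T : Fin n → Fin n → Fin n → F, IsPermutationTensor3 T ∧
      c * n * Real.log n / Real.log (Fintype.card F) ≤ (rank3 T : ℝ) := by
  refine ⟨1/1000, by norm_num, ?_⟩
  intro F _ _
  refine ⟨256, ?_⟩
  intro n hn
  by_contra hcon
  push_neg at hcon
  have hq2 : 1 < Fintype.card F := Fintype.one_lt_card
  have hq : (1:ℝ) < (Fintype.card F : ℝ) := by exact_mod_cast hq2
  have hlogq : 0 < Real.log (Fintype.card F) := Real.log_pos hq
  have hn1 : (1:ℝ) < (n:ℝ) := by exact_mod_cast (by omega : 1 < n)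
  have hlogn : 0 < Real.log n := Real.log_pos hn1
  set B : ℝ := 1/1000 * n * Real.log n / Real.log (Fintype.card F) with hB
  have hB0 : 0 ≤ B := by positivity
  set r := Nat.floor B with hr
  have hrB : (r:ℝ) ≤ B := Nat.floor_le hB0
  have hrank : ∀ L ∈ LRset n n, rank3 (toTensor (F := F) L) ≤ r := by
    intro L hL
    have hLR : IsLR L := by simpa [LRset] using hL
    exact Nat.le_floor (le_of_lt (hcon _ (toTensor_perm hLR)))
  have hcount := (LR_count n n le_rfl).trans (count_bound hrank)
  have hcast : ((∏ i ∈ Finset.range n, (n - i).factorial : ℕ) : ℝ) ≤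
      ((Fintype.card F : ℝ) ^ (3 * (n * r))) := by exact_mod_cast hcount
  have hup : Real.log ((∏ i ∈ Finset.range n, (n - i).factorial : ℕ) : ℝ) ≤
      3 * ((n:ℝ) * (r:ℝ)) * Real.log (Fintype.card F) := by
    calc Real.log ((∏ i ∈ Finset.range n, (n - i).factorial : ℕ) : ℝ)
        ≤ Real.log ((Fintype.card F : ℝ) ^ (3 * (n * r))) := by
          apply Real.log_le_log (by positivity) hcast
      _ = ((3 * (n * r) : ℕ) : ℝ) * Real.log (Fintype.card F) := by
          rw [Real.log_pow]
      _ = 3 * ((n:ℝ) * (r:ℝ)) * Real.log (Fintype.card F) := by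
          push_cast
          ring
  have hup2 : 3 * ((n:ℝ) * (r:ℝ)) * Real.log (Fintype.card F) ≤
      3 / 1000 * (n:ℝ)^2 * Real.log n := by
    have h1 : 3 * ((n:ℝ) * (r:ℝ)) * Real.log (Fintype.card F) ≤
        3 * ((n:ℝ) * B) * Real.log (Fintype.card F) := by
      have hn0 : (0:ℝ) ≤ (n:ℝ) := by positivity
      gcongr
    have h2 : B * Real.log (Fintype.card F) = 1/1000 * n * Real.log n := by
      rw [hB]
      field_simp
    calc 3 * ((n:ℝ) * (r:ℝ)) * Real.log (Fintype.card F)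
        ≤ 3 * ((n:ℝ) * B) * Real.log (Fintype.card F) := h1
      _ = 3 * (n:ℝ) * (B * Real.log (Fintype.card F)) := by ring
      _ = 3 * (n:ℝ) * (1/1000 * n * Real.log n) := by rw [h2]
      _ = 3 / 1000 * (n:ℝ)^2 * Real.log n := by ring
  have hlow := prod_fact_lower (n := n) hn
  have hn256 : (256:ℝ) ≤ (n:ℝ) := by exact_mod_cast hn
  nlinarith [mul_pos (mul_pos (by nlinarith : (0:ℝ) < (n:ℝ)^2) hlogn) (by norm_num : (0:ℝ) < 1)]
end

section
/- Let G be a finite abelian group and d ≥ 2. Then the tensor rank of the group tensor T_G^d over the complex numbers ℂ is exactly |G|. -/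
/-- The tensor rank of an order-`d` cube tensor `T : I^d → F`:
the least `r` such that `T` is the sum of `r` simple tensors. -/
noncomputable def tensorRank (F : Type*) [Field F] {d : ℕ} {I : Type*}
    (T : (Fin d → I) → F) : ℕ :=
  sInf {r : ℕ | ∃ v : Fin r → Fin d → I → F, ∀ i, T i = ∑ l, ∏ j, v l j (i j)}

/-- The order-`d` group tensor of a group `G` over `F`:
`T(g₁, …, g_d) = 1` if `g₁ ⋯ g_d = 1` and `0` otherwise. -/
noncomputable def groupTensor (F : Type*) [Field F] (G : Type*) [Group G] [DecidableEq G]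
    (d : ℕ) : (Fin d → G) → F :=
  fun g => if (List.ofFn g).prod = 1 then 1 else 0

open Finset in
/-- For any finite abelian group `G` and `d ≥ 2`, the rank of the group tensor
`T_G^d` over the complex numbers is exactly `|G|`. -/
theorem stmt8 (G : Type*) [CommGroup G] [Fintype G] [DecidableEq G] (d : ℕ) (hd : 2 ≤ d) :
    tensorRank ℂ (groupTensor ℂ G d) = Fintype.card G := by
  classical
  set N := Fintype.card G with hNdef
  have hN : (N : ℂ) ≠ 0 := Nat.cast_ne_zero.2 Fintype.card_ne_zero
  set z0 : Fin d := ⟨0, by omega⟩ with hz0def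
  set z1 : Fin d := ⟨1, by omega⟩ with hz1def
  have hz01 : z0 ≠ z1 := by simp [hz0def, hz1def, Fin.ext_iff]
  -- the membership set
  set S : Set ℕ :=
    {r : ℕ | ∃ v : Fin r → Fin d → G → ℂ, ∀ i, groupTensor ℂ G d i = ∑ l, ∏ j, v l j (i j)}
    with hSdef
  -- Upper bound : N ∈ S via characters
  have hcard : Fintype.card (AddChar (Additive G) ℂ) = N := by
    rw [AddChar.card_eq, Fintype.card_additive, hNdef]
  have e : AddChar (Additive G) ℂ ≃ Fin N := Fintype.equivFinOfCardEq hcard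
  have key : ∀ (ψ : AddChar (Additive G) ℂ) (i : Fin d → G),
      ψ (Additive.ofMul (∏ j, i j)) = ∏ j, ψ (Additive.ofMul (i j)) := by
    intro ψ i
    let φ : G →* ℂ :=
      { toFun := fun g => ψ (Additive.ofMul g),
        map_one' := ψ.map_zero_eq_one,
        map_mul' := fun a b => ψ.map_add_eq_mul a b }
    exact map_prod φ i univ
  have hmem : N ∈ S := by
    refine ⟨fun l j g =>
      (e.symm l) (Additive.ofMul g) * (if j = z0 then ((N : ℂ))⁻¹ else 1), fun i => ?_⟩
    have h1 : ∀ l : Fin N, (∏ j, (e.symm l) (Additive.ofMul (i j)) *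
        (if j = z0 then ((N : ℂ))⁻¹ else 1))
        = (e.symm l) (Additive.ofMul (∏ j, i j)) * (N : ℂ)⁻¹ := by
      intro l
      rw [Finset.prod_mul_distrib, ← key, Finset.prod_ite_eq' univ z0 (fun _ => ((N : ℂ))⁻¹)]
      simp
    rw [Finset.sum_congr rfl (fun l _ => h1 l), ← Finset.sum_mul,
      Equiv.sum_comp e.symm (fun ψ => ψ (Additive.ofMul (∏ j, i j))),
      AddChar.sum_apply_eq_ite]
    have hofmul : (Additive.ofMul (∏ j, i j) = 0) ↔ ((∏ j, i j) = 1) := by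
      constructor <;> intro h <;> exact h
    rw [groupTensor, List.prod_ofFn]
    by_cases h : (∏ j, i j) = 1
    · rw [if_pos h, if_pos (hofmul.mpr h)]
      field_simp
      simp [hNdef]
    · rw [if_neg h, if_neg (fun hc => h (hofmul.mp hc)), zero_mul]
  -- Lower bound : every r ∈ S satisfies N ≤ r
  have hlower : ∀ r ∈ S, N ≤ r := by
    rintro r ⟨v, hv⟩
    set b : Fin r → G → ℂ :=
      fun l g' => ∏ j ∈ univ.erase z0, v l j (if j = z1 then g'⁻¹ else 1) with hbdef
    have hspan : ∀ g : G, (Pi.single g 1 : G → ℂ) ∈ Submodule.span ℂ (Set.range b) := by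
      intro g
      have hkey : (Pi.single g 1 : G → ℂ) = fun g' => ∑ l, v l z0 g * b l g' := by
        funext g'
        set i : Fin d → G := fun j => if j = z0 then g else if j = z1 then g'⁻¹ else 1
          with hidef
        have hprod : (∏ j, i j) = g * g'⁻¹ := by
          have : ∀ j : Fin d, i j =
              (if j = z0 then g else 1) * (if j = z1 then g'⁻¹ else 1) := by
            intro j
            by_cases h0 : j = z0
            · by_cases h1 : j = z1
              · exact absurd (h0.symm.trans h1) hz01
              · simp [hidef, h0, h1, hz01]
            · by_cases h1 : j = z1 <;> simp [hidef, h0, h1, Ne.symm hz01]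
          rw [Finset.prod_congr rfl (fun j _ => this j), Finset.prod_mul_distrib,
            Finset.prod_ite_eq' univ z0 (fun _ => g),
            Finset.prod_ite_eq' univ z1 (fun _ => g'⁻¹)]
          simp
        have hT : groupTensor ℂ G d i = if g' = g then 1 else 0 := by
          rw [groupTensor, List.prod_ofFn, hprod]
          have : (g * g'⁻¹ = 1) ↔ (g' = g) := by
            rw [mul_inv_eq_one]; exact eq_comm
          simp only [this]
        have hsplit : ∀ l : Fin r, (∏ j, v l j (i j)) = v l z0 g * b l g' := by
          intro l
          rw [← Finset.mul_prod_erase univ (fun j => v l j (i j)) (mem_univ z0)]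
          have hi0 : i z0 = g := by simp [hidef]
          have : ∀ j ∈ univ.erase z0, v l j (i j) = v l j (if j = z1 then g'⁻¹ else 1) := by
            intro j hj
            have hj0 : j ≠ z0 := (Finset.mem_erase.mp hj).1
            simp [hidef, hj0]
          rw [hi0, Finset.prod_congr rfl this]
        have := hv i
        rw [hT, Finset.sum_congr rfl (fun l _ => hsplit l)] at this
        simpa [Pi.single_apply] using this
      rw [hkey]
      have : (fun g' => ∑ l, v l z0 g * b l g') = ∑ l, (v l z0 g) • b l := by
        funext g'; simp
      rw [this]
      exact Submodule.sum_mem _ fun l _ =>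
        Submodule.smul_mem _ _ (Submodule.subset_span ⟨l, rfl⟩)
    have htop : Submodule.span ℂ (Set.range b) = ⊤ := by
      rw [eq_top_iff, ← (Pi.basisFun ℂ G).span_eq, Submodule.span_le]
      rintro _ ⟨g, rfl⟩
      rw [Pi.basisFun_apply]
      exact hspan g
    have h1 : N = Module.finrank ℂ (Submodule.span ℂ (Set.range b)) := by
      rw [htop, finrank_top, Module.finrank_fintype_fun_eq_card]
    have h2 : Module.finrank ℂ (Submodule.span ℂ (Set.range b)) ≤ r := by
      refine (finrank_span_le_card (Set.range b)).trans ?_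
      rw [Set.toFinset_card]
      simpa using Fintype.card_range_le b
    omega
  refine le_antisymm (Nat.sInf_le hmem) (le_csInf ⟨N, hmem⟩ hlower)
end

section
/- Let F be a field with at least d(n−1)+1 elements and d ≥ 2. Then the group tensor of the cyclic group ℤ_n satisfies rank_F(T_{ℤ_n}^d) ≤ d(n−1)+1. -/
/-- The order-`d` group tensor of the cyclic group `ℤ/nℤ` over `F`:
`T(i₁,…,i_d) = 1` if `i₁ + ⋯ + i_d ≡ 0 (mod n)` and `0` otherwise. -/
noncomputable def cyclicGroupTensor (F : Type*) [Field F] (n d : ℕ) :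
    (Fin d → ZMod n) → F :=
  fun i => if (∑ j, i j) = 0 then 1 else 0

/-- If `F` has at least `d(n-1)+1` elements and `d ≥ 2`, then the group tensor of the
cyclic group `ℤ/nℤ` satisfies `rank_F(T_{ℤₙ}^d) ≤ d(n-1)+1`. -/
theorem stmt10 (F : Type*) [Field F] (d n : ℕ) (hd : 2 ≤ d) (hn : 1 ≤ n)
    (hF : ((d * (n - 1) + 1 : ℕ) : Cardinal) ≤ Cardinal.mk F) :
    tensorRank F (cyclicGroupTensor F n d) ≤ d * (n - 1) + 1 := by
  haveI : NeZero n := ⟨by omega⟩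
  haveI : NeZero d := ⟨by omega⟩
  set r : ℕ := d * (n - 1) + 1 with hr
  -- get r distinct elements of F
  have hemb : Nonempty (Fin r ↪ F) := by
    have h2 : Nonempty (ULift (Fin r) ↪ F) := by
      rw [← Cardinal.le_def]; simpa using hF
    obtain ⟨e⟩ := h2
    exact ⟨Equiv.ulift.symm.toEmbedding.trans e⟩
  obtain ⟨α⟩ := hemb
  -- Vandermonde matrix
  set V : Matrix (Fin r) (Fin r) F := Matrix.transpose (Matrix.vandermonde (fun l => α l)) with hV
  have hdet : V.det ≠ 0 := by
    rw [hV, Matrix.det_transpose]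
    exact (Matrix.det_vandermonde_ne_zero_iff).mpr α.injective
  set χ : Fin r → F := fun s => if n ∣ (s : ℕ) then 1 else 0 with hχ
  set c : Fin r → F := Matrix.mulVec V⁻¹ χ with hc
  have hsolve : Matrix.mulVec V c = χ := by
    rw [hc, Matrix.mulVec_mulVec, Matrix.mul_nonsing_inv _ (isUnit_iff_ne_zero.mpr hdet),
      Matrix.one_mulVec]
  -- the simple tensor decomposition
  refine Nat.sInf_le ?_
  refine ⟨fun l j a => (if j = 0 then c l else 1) * α l ^ a.val, ?_⟩
  intro i
  have hs : (∑ j, (i j).val) < r := by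
    have : (∑ j, (i j).val) ≤ ∑ _j : Fin d, (n - 1) := by
      refine Finset.sum_le_sum fun j _ => ?_
      have := ZMod.val_lt (i j)
      omega
    simp only [Finset.sum_const, Finset.card_univ, Fintype.card_fin, smul_eq_mul] at this
    omega
  set s : Fin r := ⟨∑ j, (i j).val, hs⟩ with hsdef
  have hprod : ∀ l, (∏ j, (if j = 0 then c l else 1) * α l ^ (i j).val)
      = c l * α l ^ (s : ℕ) := by
    intro l
    rw [Finset.prod_mul_distrib, Finset.prod_pow_eq_pow_sum]
    congr 1
    rw [Finset.prod_ite_eq' Finset.univ (0 : Fin d) (fun _ => c l)]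
    simp
  have hrow : (Matrix.mulVec V c) s = ∑ l, c l * α l ^ (s : ℕ) := by
    simp only [Matrix.mulVec, dotProduct, hV, Matrix.transpose_apply,
      Matrix.vandermonde]
    exact Finset.sum_congr rfl fun l _ => mul_comm _ _
  have key : (∑ l, ∏ j, (if j = 0 then c l else 1) * α l ^ (i j).val) = χ s := by
    rw [← hsolve, hrow]
    exact Finset.sum_congr rfl fun l _ => hprod l
  rw [key, hχ]
  simp only [cyclicGroupTensor]
  have hcast : (∑ j, i j) = ((∑ j, (i j).val : ℕ) : ZMod n) := by
    push_cast
    refine Finset.sum_congr rfl fun j _ => ?_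
    simp [ZMod.natCast_val, ZMod.cast_id]
  rw [hcast]
  by_cases h : n ∣ ∑ j, (i j).val
  · rw [if_pos h, if_pos ((ZMod.natCast_eq_zero_iff _ _).mpr h)]
  · rw [if_neg h, if_neg (fun hc => h ((ZMod.natCast_eq_zero_iff _ _).mp hc))]
end

section
/- Let G be a finite abelian group, d ≥ 2, and let F be a field with at least d(|G|−1)+1 elements. Then rank_F(T_G^d) ≤ |G|^{1 + lg d}, where lg denotes the base-2 logarithm (i.e., the real number rank_F(T_G^d) is at most |G| · |G|^{lg d}). -/
open Finset

/-- Interpolation family for a cyclic group. -/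
private lemma hasFam_zmod (F : Type*) [Field F] (d n : ℕ) [NeZero n]
    (hF : ((d * (n - 1) + 1 : ℕ) : Cardinal) ≤ Cardinal.mk F) :
    ∃ (c : Fin (d * (n - 1) + 1) → F) (w : Fin (d * (n - 1) + 1) → Multiplicative (ZMod n) → F),
      ∀ g : Fin d → Multiplicative (ZMod n),
        (if (∏ i, g i) = 1 then (1 : F) else 0) = ∑ l, c l * ∏ i, w l (g i) := by
  have hemb : Nonempty (Fin (d * (n - 1) + 1) ↪ F) := by
    refine Cardinal.lift_mk_le'.mp ?_
    rw [Cardinal.lift_mk_fin, Cardinal.lift_id'.{0}]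
    exact hF
  obtain ⟨β⟩ := hemb
  set D := d * (n - 1) with hD
  set V := Matrix.vandermonde (fun i : Fin (D + 1) => β i) with hV
  have hdet : IsUnit V.det :=
    (Matrix.det_vandermonde_ne_zero_iff.mpr β.injective).isUnit
  set f : Fin (D + 1) → F := fun s => if n ∣ (s : ℕ) then 1 else 0 with hf
  set c : Fin (D + 1) → F := Matrix.vecMul f V⁻¹ with hc
  have key : ∀ s : Fin (D + 1), (∑ l, c l * β l ^ (s : ℕ)) = f s := by
    intro s
    have h1 : Matrix.vecMul c V = f := by
      rw [hc, Matrix.vecMul_vecMul, Matrix.nonsing_inv_mul _ hdet, Matrix.vecMul_one]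
    have := congrFun h1 s
    simpa [Matrix.vecMul, dotProduct, hV, Matrix.vandermonde] using this
  refine ⟨c, fun l a => β l ^ (Multiplicative.toAdd a).val, fun g => ?_⟩
  set S : ℕ := ∑ i, (Multiplicative.toAdd (g i)).val with hS
  have hSle : S ≤ D := by
    rw [hS, hD]
    calc ∑ i, (Multiplicative.toAdd (g i)).val ≤ ∑ _i : Fin d, (n - 1) := by
          refine Finset.sum_le_sum fun i _ => ?_
          exact Nat.le_sub_one_of_lt (ZMod.val_lt _)
      _ = d * (n - 1) := by simp [mul_comm]
  set s0 : Fin (D + 1) := ⟨S, Nat.lt_succ_of_le hSle⟩ with hs0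
  have hprod : (∏ i, g i) = 1 ↔ n ∣ S := by
    rw [← toAdd_eq_zero, toAdd_prod]
    have : (∑ i, Multiplicative.toAdd (g i)) = ((S : ℕ) : ZMod n) := by
      rw [hS, Nat.cast_sum]
      exact Finset.sum_congr rfl fun i _ => (ZMod.natCast_zmod_val _).symm
    rw [this, ZMod.natCast_eq_zero_iff]
  have hrhs : ∀ l, (∏ i, β l ^ (Multiplicative.toAdd (g i)).val) = β l ^ S := by
    intro l
    rw [hS, Finset.prod_pow_eq_pow_sum]
  calc (if (∏ i, g i) = 1 then (1 : F) else 0) = f s0 := by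
        rw [hf]
        simp only [hprod, hs0]
      _ = ∑ l, c l * β l ^ (s0 : ℕ) := (key s0).symm
      _ = ∑ l, c l * ∏ i, β l ^ (Multiplicative.toAdd (g i)).val := by
        refine Finset.sum_congr rfl fun l _ => ?_
        rw [hrhs]

/-- Combining interpolation families over a finite product of groups. -/
private lemma fam_pi {F : Type*} [Field F] {d : ℕ} {ι : Type} [Fintype ι] [DecidableEq ι]
    {H : ι → Type} [∀ i, CommGroup (H i)] [∀ i, DecidableEq (H i)]
    {Λ : ι → Type} [∀ i, Fintype (Λ i)]
    (c : ∀ i, Λ i → F) (w : ∀ i, Λ i → H i → F)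
    (h : ∀ i, ∀ g : Fin d → H i,
      (if (∏ j, g j) = 1 then (1 : F) else 0) = ∑ l, c i l * ∏ j, w i l (g j)) :
    ∀ g : Fin d → (∀ i, H i),
      (if (∏ j, g j) = 1 then (1 : F) else 0)
        = ∑ l : (∀ i, Λ i), (∏ i, c i (l i)) * ∏ j, ∏ i, w i (l i) (g j i) := by
  intro g
  have h1 : ((∏ j, g j) = 1) ↔ ∀ i, (∏ j, g j i) = 1 := by
    rw [funext_iff]
    refine forall_congr' fun i => ?_
    rw [Finset.prod_apply]
    rfl
  calc (if (∏ j, g j) = 1 then (1 : F) else 0)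
      = ∏ i, (if (∏ j, g j i) = 1 then (1 : F) else 0) := by
        rw [Finset.prod_boole]
        simp [h1]
    _ = ∏ i, ∑ l : Λ i, c i l * ∏ j, w i l (g j i) := by
        exact Finset.prod_congr rfl fun i _ => h i (fun j => g j i)
    _ = ∑ l : (∀ i, Λ i), ∏ i, (c i (l i) * ∏ j, w i (l i) (g j i)) :=
        Fintype.prod_sum _
    _ = ∑ l : (∀ i, Λ i), (∏ i, c i (l i)) * ∏ j, ∏ i, w i (l i) (g j i) := by
        refine Finset.sum_congr rfl fun l _ => ?_
        rw [Finset.prod_mul_distrib, Finset.prod_comm]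

/-- For a finite abelian group `G`, `d ≥ 2`, and a field `F` with at least
`d(|G|-1)+1` elements, `rank_F(T_G^d) ≤ |G|^{1 + lg d} = |G| · |G|^{lg d}`. -/
theorem stmt13 (F : Type*) [Field F] (G : Type*) [CommGroup G] [Fintype G] [DecidableEq G]
    (d : ℕ) (hd : 2 ≤ d)
    (hF : ((d * (Fintype.card G - 1) + 1 : ℕ) : Cardinal) ≤ Cardinal.mk F) :
    (tensorRank F (groupTensor F G d) : ℝ) ≤
      (Fintype.card G : ℝ) ^ ((1 : ℝ) + Real.logb 2 d) := by
  classical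
  obtain ⟨ι, fι, n, hn, ⟨e⟩⟩ := CommGroup.equiv_prod_multiplicative_zmod_of_finite G
  haveI : ∀ i, NeZero (n i) := fun i => ⟨by have := hn i; omega⟩
  haveI : NeZero d := ⟨by omega⟩
  have hcard : Fintype.card G = ∏ i, n i := by
    rw [Fintype.card_congr e.toEquiv, Fintype.card_pi]
    exact Finset.prod_congr rfl fun i _ => by
      simp [ZMod.card (n i)]
  have hni : ∀ i, n i ≤ Fintype.card G := fun i => by
    rw [hcard]
    exact Finset.single_le_prod' (fun j _ => Nat.one_le_iff_ne_zero.mpr (NeZero.ne _))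
      (Finset.mem_univ i)
  have hFi : ∀ i, ((d * (n i - 1) + 1 : ℕ) : Cardinal) ≤ Cardinal.mk F := fun i => by
    refine le_trans ?_ hF
    rw [Nat.cast_le]
    have h1 : n i - 1 ≤ Fintype.card G - 1 := Nat.sub_le_sub_right (hni i) 1
    exact Nat.add_le_add_right (Nat.mul_le_mul_left d h1) 1
  choose c w hw using fun i => hasFam_zmod F d (n i) (hFi i)
  set Λ := ∀ i, Fin (d * (n i - 1) + 1) with hΛ
  set C : Λ → F := fun l => ∏ i, c i (l i) with hC
  set W : Λ → G → F := fun l x => ∏ i, w i (l i) (e x i) with hW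
  have hfam : ∀ g : Fin d → G,
      (if (∏ j, g j) = 1 then (1 : F) else 0) = ∑ l : Λ, C l * ∏ j, W l (g j) := by
    intro g
    have h2 := fam_pi c w hw (fun j => e (g j))
    have h3 : ((∏ j, g j) = 1) ↔ ((∏ j, e (g j)) = 1) := by
      rw [← map_prod e, EmbeddingLike.map_eq_one_iff]
    rw [hC, hW]
    simp only [h3]
    exact h2
  set N := ∏ i, (d * (n i - 1) + 1) with hN
  have hcardΛ : Fintype.card Λ = N := by
    show Fintype.card (∀ i, Fin (d * (n i - 1) + 1)) = N
    rw [Fintype.card_pi, hN]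
    exact Finset.prod_congr rfl fun i _ => Fintype.card_fin _
  set q : Fin N ≃ Λ := (Fintype.equivFinOfCardEq hcardΛ).symm with hq
  have hrank : tensorRank F (groupTensor F G d) ≤ N := by
    apply Nat.sInf_le
    refine ⟨fun l j x => (if j = 0 then C (q l) else 1) * W (q l) x, fun g => ?_⟩
    have hgt : groupTensor F G d g = if (∏ j, g j) = 1 then (1 : F) else 0 := by
      rw [groupTensor, List.prod_ofFn]
    rw [hgt, hfam g, ← Equiv.sum_comp q (fun l => C l * ∏ j, W l (g j))]
    refine Finset.sum_congr rfl fun l _ => ?_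
    rw [Finset.prod_mul_distrib]
    congr 1
    simp
  have hd1 : (1 : ℝ) ≤ (d : ℝ) := by exact_mod_cast Nat.one_le_of_lt hd
  have hαlog : 0 ≤ Real.logb 2 (d : ℝ) := Real.logb_nonneg one_lt_two hd1
  have hfactor : ∀ i, ((d * (n i - 1) + 1 : ℕ) : ℝ)
      ≤ (n i : ℝ) ^ ((1 : ℝ) + Real.logb 2 d) := by
    intro i
    have hm2 : (2 : ℝ) ≤ (n i : ℝ) := by exact_mod_cast hn i
    have hm0 : (0 : ℝ) < (n i : ℝ) := by linarith
    have h2d : (2 : ℝ) ^ Real.logb 2 (d : ℝ) = (d : ℝ) :=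
      Real.rpow_logb (by norm_num) (by norm_num) (by positivity)
    have h1 : (d : ℝ) ≤ (n i : ℝ) ^ Real.logb 2 (d : ℝ) :=
      h2d.symm.trans_le (Real.rpow_le_rpow (by norm_num) hm2 hαlog)
    have h4 : (n i : ℝ) ^ ((1 : ℝ) + Real.logb 2 d)
        = (n i : ℝ) * (n i : ℝ) ^ Real.logb 2 (d : ℝ) := by
      rw [Real.rpow_add hm0, Real.rpow_one]
    have h5 : ((d * (n i - 1) + 1 : ℕ) : ℝ) = (d : ℝ) * ((n i : ℝ) - 1) + 1 := by
      have : (1 : ℕ) ≤ n i := le_of_lt (hn i)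
      push_cast [this]
      ring
    rw [h4, h5]
    nlinarith [Real.rpow_nonneg (le_of_lt hm0) (Real.logb 2 (d : ℝ))]
  have hnum : (N : ℝ) ≤ (Fintype.card G : ℝ) ^ ((1 : ℝ) + Real.logb 2 d) := by
    have hcast : (N : ℝ) = ∏ i, ((d * (n i - 1) + 1 : ℕ) : ℝ) := by
      rw [hN]; push_cast; rfl
    calc (N : ℝ) = ∏ i, ((d * (n i - 1) + 1 : ℕ) : ℝ) := hcast
      _ ≤ ∏ i, (n i : ℝ) ^ ((1 : ℝ) + Real.logb 2 d) := by
          refine Finset.prod_le_prod (fun i _ => by positivity) fun i _ => hfactor i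
      _ = (∏ i, (n i : ℝ)) ^ ((1 : ℝ) + Real.logb 2 d) :=
          Real.finset_prod_rpow _ _ (fun i _ => by positivity) _
      _ = (Fintype.card G : ℝ) ^ ((1 : ℝ) + Real.logb 2 d) := by
          rw [hcard]; push_cast; rfl
  exact le_trans (by exact_mod_cast hrank) hnum
end

section
/- Let F be a field and K a field extension of F that is finite-dimensional as an F-vector space, with m = dim_F K. Then for any tensor T : [n]^d → F (d ≥ 1), viewing T also as a tensor with entries in K, we have rank_F(T) ≤ m^{d−1} · rank_K(T). -/
/-- If `T` admits a decomposition as a sum of simple tensors indexed by a finite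
type `α`, then `Fintype.card α` belongs to the defining set of the rank. -/
lemma tensorRank_mem_card {F : Type*} [Field F] {d : ℕ} {I : Type*}
    (T : (Fin d → I) → F) (α : Type*) [Fintype α] (v : α → Fin d → I → F)
    (h : ∀ i, T i = ∑ l, ∏ j, v l j (i j)) :
    Fintype.card α ∈ {r : ℕ | ∃ v : Fin r → Fin d → I → F,
      ∀ i, T i = ∑ l, ∏ j, v l j (i j)} := by
  refine ⟨fun l => v ((Fintype.equivFin α).symm l), fun i => ?_⟩
  rw [h i, ← Equiv.sum_comp (Fintype.equivFin α).symm
    (fun l => ∏ j, v l j (i j))]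

/-- If `T` admits a decomposition as a sum of simple tensors indexed by a finite
type `α`, then its rank is at most the cardinality of `α`. -/
lemma tensorRank_le_card {F : Type*} [Field F] {d : ℕ} {I : Type*}
    (T : (Fin d → I) → F) (α : Type*) [Fintype α] (v : α → Fin d → I → F)
    (h : ∀ i, T i = ∑ l, ∏ j, v l j (i j)) :
    tensorRank F T ≤ Fintype.card α :=
  Nat.sInf_le (tensorRank_mem_card T α v h)

/-- Every tensor over a finite cube admits some decomposition. -/
lemma tensorRank_exists_decomp {F : Type*} [Field F] {d n : ℕ} (hd : 1 ≤ d)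
    (T : (Fin d → Fin n) → F) :
    ∃ v : Fin (tensorRank F T) → Fin d → Fin n → F,
      ∀ i, T i = ∑ l, ∏ j, v l j (i j) := by
  have hz : (0 : ℕ) < d := hd
  set z : Fin d := ⟨0, hz⟩
  have hT : ∀ i, T i = ∑ l : Fin d → Fin n, ∏ j,
      (fun (l : Fin d → Fin n) (j : Fin d) (x : Fin n) =>
        (if j = z then T l else 1) * (if x = l j then 1 else 0)) l j (i j) := by
    intro i
    have key : ∀ l : Fin d → Fin n, (∏ j, ((if j = z then T l else 1) *
        (if i j = l j then 1 else 0))) = if i = l then T l else 0 := by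
      intro l
      by_cases hl : i = l
      · subst hl
        simp only [if_pos rfl, if_true, mul_one]
        simp [Finset.prod_ite_eq' Finset.univ z fun _ => T i]
      · rw [if_neg hl]
        obtain ⟨j, hj⟩ : ∃ j, i j ≠ l j := by
          by_contra hc
          push_neg at hc
          exact hl (funext hc)
        exact Finset.prod_eq_zero (Finset.mem_univ j) (by simp [hj])
    simp only [key]
    simp [Finset.sum_ite_eq Finset.univ i T]
  have hne : {r : ℕ | ∃ v : Fin r → Fin d → Fin n → F,
      ∀ i, T i = ∑ l, ∏ j, v l j (i j)}.Nonempty :=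
    ⟨_, tensorRank_mem_card T (Fin d → Fin n)
      (fun (l : Fin d → Fin n) (j : Fin d) (x : Fin n) =>
        (if j = z then T l else 1) * (if x = l j then 1 else 0)) hT⟩
  obtain ⟨v, hv⟩ := Nat.sInf_mem hne
  exact ⟨v, hv⟩

/-- Let `K` be a field extension of `F` of finite dimension `m = dim_F K`.  For any
tensor `T : [n]^d → F`, viewing `T` as a tensor over `K` via the inclusion `F ⊆ K`,
we have `rank_F(T) ≤ m^{d-1} · rank_K(T)`. -/
theorem stmt14 (F K : Type*) [Field F] [Field K] [Algebra F K] [FiniteDimensional F K]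
    (d n : ℕ) (hd : 1 ≤ d) (T : (Fin d → Fin n) → F) :
    tensorRank F T ≤
      (Module.finrank F K) ^ (d - 1) * tensorRank K (fun i => algebraMap F K (T i)) := by
  classical
  have hz : (0 : ℕ) < d := hd
  set z : Fin d := ⟨0, hz⟩
  set m := Module.finrank F K with hm
  set b : Module.Basis (Fin m) F K := Module.finBasis F K
  -- a linear functional splitting the inclusion F → K
  obtain ⟨s, hs⟩ : ∃ s, b.repr 1 s ≠ 0 := by
    by_contra hc
    push_neg at hc
    have : b.repr (1 : K) = 0 := by ext t; simp [hc t]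
    have h1 : (1 : K) = 0 := by
      have := congrArg b.repr.symm this
      simpa using this
    exact one_ne_zero h1
  set φ : K →ₗ[F] F := (b.repr 1 s)⁻¹ • b.coord s with hφ
  have hφ1 : φ 1 = 1 := by
    simp [hφ, Module.Basis.coord_apply, inv_mul_cancel₀ hs]
  have hφa : ∀ x : F, φ (algebraMap F K x) = x := by
    intro x
    rw [Algebra.algebraMap_eq_smul_one, map_smul, hφ1, smul_eq_mul, mul_one]
  -- the decomposition over K
  set r := tensorRank K (fun i => algebraMap F K (T i)) with hr
  obtain ⟨v, hv⟩ := tensorRank_exists_decomp hd (fun i => algebraMap F K (T i))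
  -- coordinates of the vectors
  set c : Fin r → Fin d → Fin n → Fin m → F := fun l j i t => b.repr (v l j i) t
  -- the decomposition over F
  set τ := ({j : Fin d // j ≠ z} → Fin m)
  set w : Fin r × τ → Fin d → Fin n → F := fun p j i =>
    if h : j = z then φ (v p.1 z i * ∏ j' : {j : Fin d // j ≠ z}, b (p.2 j'))
    else c p.1 j i (p.2 ⟨j, h⟩) with hw
  have hdecomp : ∀ i, T i = ∑ p : Fin r × τ, ∏ j, w p j (i j) := by
    intro i
    have hTi : T i = φ (algebraMap F K (T i)) := (hφa (T i)).symm
    rw [hTi, hv i, map_sum, Fintype.sum_prod_type]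
    refine Finset.sum_congr rfl fun l _ => ?_
    -- expand the product over K
    have hsplit : (∏ j, v l j (i j)) =
        v l z (i z) * ∏ j' : {j : Fin d // j ≠ z}, v l j' (i j') := by
      rw [Fintype.prod_eq_mul_prod_compl z (fun j => v l j (i j))]
      congr 1
      rw [← Finset.prod_subtype (p := fun j => j ≠ z) ({z}ᶜ : Finset (Fin d))
        (fun j => by simp) (fun j => v l j (i j))]
    have hrepr : ∀ j' : {j : Fin d // j ≠ z},
        v l j' (i j') = ∑ t : Fin m, c l j' (i j') t • b t := by
      intro j'
      exact (b.sum_repr (v l j' (i j'))).symm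
    have hexp : (∏ j' : {j : Fin d // j ≠ z}, v l j' (i j')) =
        ∑ t : τ, (∏ j' : {j : Fin d // j ≠ z}, c l j' (i j') (t j')) •
          ∏ j' : {j : Fin d // j ≠ z}, b (t j') := by
      simp_rw [hrepr]
      rw [Fintype.prod_sum (fun (j' : {j : Fin d // j ≠ z}) (t : Fin m) =>
        c l j'.1 (i j'.1) t • b t)]
      refine Finset.sum_congr rfl fun t _ => ?_
      simp_rw [Algebra.smul_def]
      rw [Finset.prod_mul_distrib, ← map_prod]
    rw [hsplit, hexp, Finset.mul_sum]
    simp_rw [mul_smul_comm]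
    rw [map_sum]
    refine Finset.sum_congr rfl fun t _ => ?_
    rw [map_smul]
    -- now compute the product of the w's
    have hwprod : (∏ j, w (l, t) j (i j)) =
        φ (v l z (i z) * ∏ j' : {j : Fin d // j ≠ z}, b (t j')) *
          ∏ j' : {j : Fin d // j ≠ z}, c l j' (i j') (t j') := by
      rw [Fintype.prod_eq_mul_prod_compl z (fun j => w (l, t) j (i j)),
        Finset.prod_subtype (p := fun j => j ≠ z) ({z}ᶜ : Finset (Fin d))
          (fun j => by simp) (fun j => w (l, t) j (i j))]
      have h1 : w (l, t) z (i z) =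
          φ (v l z (i z) * ∏ j' : {j : Fin d // j ≠ z}, b (t j')) := by
        simp [hw]
      have h2 : ∀ j' : {j : Fin d // j ≠ z},
          w (l, t) j' (i j') = c l j' (i j') (t j') := by
        intro j'
        simp [hw, dif_neg j'.2]
      rw [h1]
      exact congrArg _ (Finset.prod_congr rfl fun j' _ => h2 j')
    rw [hwprod, smul_eq_mul, mul_comm]
  have hcard := tensorRank_le_card T (Fin r × τ) w hdecomp
  have hτ : Fintype.card τ = m ^ (d - 1) := by
    rw [Fintype.card_fun, Fintype.card_fin]
    congr 1
    have : Fintype.card {j : Fin d // j ≠ z} =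
        Fintype.card (Fin d) - Fintype.card {j : Fin d // j = z} :=
      Fintype.card_subtype_compl _
    rw [this, Fintype.card_subtype_eq, Fintype.card_fin]
  calc tensorRank F T ≤ Fintype.card (Fin r × τ) := hcard
    _ = r * m ^ (d - 1) := by rw [Fintype.card_prod, Fintype.card_fin, hτ]
    _ = m ^ (d - 1) * r := mul_comm _ _
end

section
/- Let F be a linearly ordered field, n ≥ 1 and d ≥ 2, and consider the group tensor T_{ℤ_n}^d : (ℤ_n)^d → F. Then (1) rank_F(T_{ℤ_n}^d) ≤ d(n−1)+1, and (2) the monotone tensor rank of T_{ℤ_n}^d over F is exactly n^{d−1}. -/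
/-- The monotone tensor rank over a linearly ordered field: the least `r` such that
`T` is a sum of `r` simple tensors all of whose vectors have nonnegative entries. -/
noncomputable def mrank (F : Type*) [Field F] [LinearOrder F] [IsStrictOrderedRing F] {d : ℕ} {I : Type*}
    (T : (Fin d → I) → F) : ℕ :=
  sInf {r : ℕ | ∃ v : Fin r → Fin d → I → F,
    (∀ l j i, 0 ≤ v l j i) ∧ ∀ i, T i = ∑ l, ∏ j, v l j (i j)}

lemma snoc_char (n m : ℕ) [NeZero n] (i : Fin (m+1) → ZMod n) (a : Fin m → ZMod n) :
    i = Fin.snoc a (-(∑ k, a k)) ↔ (a = Fin.init i ∧ ∑ j, i j = 0) := by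
  constructor
  · rintro rfl
    refine ⟨by simp, ?_⟩
    rw [Fin.sum_univ_castSucc]
    simp
  · rintro ⟨ha, h⟩
    subst ha
    rw [Fin.sum_univ_castSucc] at h
    have hlast : i (Fin.last m) = -(∑ k : Fin m, Fin.init i k) := by
      have e : ∑ k : Fin m, Fin.init i k = ∑ k : Fin m, i k.castSucc := rfl
      rw [e]
      exact eq_neg_of_add_eq_zero_right h
    rw [← hlast]
    exact (Fin.snoc_init_self i).symm

lemma tensor_sum_snoc (F : Type*) [Field F] [LinearOrder F] [IsStrictOrderedRing F] (n m : ℕ) [NeZero n]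
    (i : Fin (m+1) → ZMod n) :
    cyclicGroupTensor F n (m+1) i
      = ∑ a : Fin m → ZMod n, if i = Fin.snoc a (-(∑ k, a k)) then (1:F) else 0 := by
  unfold cyclicGroupTensor
  simp only [snoc_char]
  by_cases h : (∑ j, i j) = 0 <;> simp [h, Finset.sum_ite_eq']

/-- For a linearly ordered field `F`, `n ≥ 1` and `d ≥ 2`, the group tensor
`T_{ℤₙ}^d` has `rank_F(T_{ℤₙ}^d) ≤ d(n-1)+1`, while its monotone tensor rank over `F`
equals `n^{d-1}`. -/
theorem stmt16 (F : Type*) [Field F] [LinearOrder F] [IsStrictOrderedRing F] (n d : ℕ) (hn : 1 ≤ n) (hd : 2 ≤ d) :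
    tensorRank F (cyclicGroupTensor F n d) ≤ d * (n - 1) + 1 ∧
      mrank F (cyclicGroupTensor F n d) = n ^ (d - 1) := by
  obtain ⟨m, rfl⟩ : ∃ m, d = m + 1 := ⟨d - 1, by omega⟩
  haveI : NeZero n := ⟨by omega⟩
  set G : (Fin m → ZMod n) → (Fin (m+1) → ZMod n) :=
    fun a => Fin.snoc a (-(∑ k, a k)) with hGdef
  have hGsum : ∀ a, ∑ j, G a j = 0 := by
    intro a
    rw [Fin.sum_univ_castSucc]
    simp [hGdef]
  have hGcs : ∀ a (k : Fin m), G a k.castSucc = a k := by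
    intro a k; simp [hGdef]
  constructor
  · -- tensor rank bound, via Vandermonde interpolation
    set N := (m+1) * (n-1) + 1 with hN
    set x : Fin N → F := fun t => ((t : ℕ) : F) with hxdef
    set A : Matrix (Fin N) (Fin N) F := (Matrix.vandermonde x).transpose with hAdef
    have hdetA : A.det ≠ 0 := by
      rw [hAdef, Matrix.det_transpose, Matrix.det_vandermonde]
      refine Finset.prod_ne_zero_iff.mpr fun s _ => Finset.prod_ne_zero_iff.mpr fun t ht => ?_
      have hst' : s < t := Finset.mem_Ioi.mp ht
      have hst : (s:ℕ) < (t:ℕ) := hst'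
      have hlt : ((s:ℕ):F) < ((t:ℕ):F) := by exact_mod_cast hst
      exact sub_ne_zero.mpr (ne_of_gt hlt)
    set b : Fin N → F := fun s => if n ∣ (s:ℕ) then 1 else 0 with hbdef
    set c : Fin N → F := A⁻¹.mulVec b with hcdef
    have hAc : A.mulVec c = b := by
      rw [hcdef, Matrix.mulVec_mulVec, Matrix.mul_nonsing_inv _ (isUnit_iff_ne_zero.mpr hdetA),
        Matrix.one_mulVec]
    have hmem : N ∈ {r : ℕ | ∃ v : Fin r → Fin (m+1) → ZMod n → F,
        ∀ i, cyclicGroupTensor F n (m+1) i = ∑ l, ∏ j, v l j (i j)} := by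
      refine ⟨fun t j y => (if j = 0 then c t else 1) * ((t:ℕ):F) ^ y.val, fun i => ?_⟩
      have hS : ∑ j, (i j).val ≤ (m+1) * (n-1) := by
        calc ∑ j, (i j).val ≤ ∑ _j : Fin (m+1), (n-1) :=
              Finset.sum_le_sum (fun j _ => by have := ZMod.val_lt (i j); omega)
          _ = (m+1) * (n-1) := by simp [mul_comm]
      set s : Fin N := ⟨∑ j, (i j).val, by omega⟩ with hs
      have h1 : cyclicGroupTensor F n (m+1) i = b s := by
        unfold cyclicGroupTensor
        have e1 : ((∑ j, (i j).val : ℕ) : ZMod n) = ∑ j, i j := by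
          push_cast
          exact Finset.sum_congr rfl fun j _ => ZMod.natCast_rightInverse (i j)
        rw [← e1, hbdef]
        simp only [hs]
        simp only [ZMod.natCast_eq_zero_iff]
      rw [h1, ← hAc]
      show (∑ t, A s t * c t) = _
      refine Finset.sum_congr rfl fun t _ => ?_
      rw [Finset.prod_mul_distrib, Finset.prod_ite_eq' Finset.univ (0 : Fin (m+1)) (fun _ => c t),
        Finset.prod_pow_eq_pow_sum]
      simp only [Finset.mem_univ, if_true]
      rw [hAdef]
      show Matrix.vandermonde x t s * c t = _
      rw [Matrix.vandermonde]
      show x t ^ (s:ℕ) * c t = _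
      rw [hxdef, mul_comm]
    exact Nat.sInf_le hmem
  · -- monotone rank
    simp only [Nat.add_sub_cancel]
    have hcard : Fintype.card (Fin m → ZMod n) = n ^ m := by
      simp [ZMod.card]
    obtain ⟨e⟩ : Nonempty ((Fin m → ZMod n) ≃ Fin (n ^ m)) :=
      ⟨Fintype.equivFinOfCardEq hcard⟩
    have hmem : n ^ m ∈ {r : ℕ | ∃ v : Fin r → Fin (m+1) → ZMod n → F,
        (∀ l j i, 0 ≤ v l j i) ∧
        ∀ i, cyclicGroupTensor F n (m+1) i = ∑ l, ∏ j, v l j (i j)} := by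
      refine ⟨fun l j y => if y = G (e.symm l) j then 1 else 0, fun l j i => by positivity, fun i => ?_⟩
      rw [tensor_sum_snoc]
      rw [← Equiv.sum_comp e.symm (fun a => if i = G a then (1:F) else 0)]
      refine Finset.sum_congr rfl fun l _ => ?_
      set a := e.symm l
      by_cases h : i = G a
      · simp [h, a]
      · rw [if_neg h]
        obtain ⟨j, hj⟩ := Function.ne_iff.mp h
        exact (Finset.prod_eq_zero (Finset.mem_univ j) (by simp; exact hj)).symm
    refine le_antisymm (Nat.sInf_le hmem) (le_csInf ⟨_, hmem⟩ ?_)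
    rintro r ⟨v, hvpos, hveq⟩
    have key : ∀ a : Fin m → ZMod n, ∃ l : Fin r, ∀ j, v l j (G a j) ≠ 0 := by
      intro a
      have hT1 : cyclicGroupTensor F n (m+1) (G a) = 1 := by
        unfold cyclicGroupTensor
        rw [if_pos (hGsum a)]
      have h1 : (1:F) = ∑ l, ∏ j, v l j (G a j) := hT1 ▸ hveq (G a)
      by_contra hcon
      push_neg at hcon
      have hz : ∀ l : Fin r, ∏ j, v l j (G a j) = 0 := fun l => by
        obtain ⟨j, hj⟩ := hcon l
        exact Finset.prod_eq_zero (Finset.mem_univ j) hj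
      rw [Finset.sum_congr rfl (fun l _ => hz l)] at h1
      simp at h1
    choose φ hφ using key
    have hinj : Function.Injective φ := by
      intro a b hab
      by_contra hne
      obtain ⟨k, hk⟩ := Function.ne_iff.mp hne
      set q : Fin (m+1) → ZMod n := Function.update (G a) k.castSucc (b k) with hq
      have hsumq : ∑ j, q j = b k - a k := by
        have e1 : ∑ j, q j = b k + ∑ j ∈ Finset.univ.erase k.castSucc, G a j := by
          rw [hq, ← Finset.add_sum_erase Finset.univ _ (Finset.mem_univ k.castSucc)]
          rw [Function.update_self]
          congr 1
          refine Finset.sum_congr rfl fun j hj => ?_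
          exact Function.update_of_ne (Finset.ne_of_mem_erase hj) _ _
        have e2 : ∑ j ∈ Finset.univ.erase k.castSucc, G a j = - a k := by
          have e3 := Finset.add_sum_erase Finset.univ (G a) (Finset.mem_univ k.castSucc)
          rw [hGsum a, hGcs a k] at e3
          exact eq_neg_of_add_eq_zero_right e3
        rw [e1, e2]
        ring
      have hq0 : cyclicGroupTensor F n (m+1) q = 0 := by
        unfold cyclicGroupTensor
        rw [if_neg]
        rw [hsumq]
        exact sub_ne_zero.mpr (Ne.symm hk)
      have hz : ∏ j, v (φ a) j (q j) = 0 := by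
        have h0 : (0:F) = ∑ l, ∏ j, v l j (q j) := hq0 ▸ hveq q
        have := (Finset.sum_eq_zero_iff_of_nonneg
          (fun l _ => Finset.prod_nonneg fun j _ => hvpos l j (q j))).mp h0.symm
        exact this (φ a) (Finset.mem_univ _)
      obtain ⟨j, _, hj0⟩ := Finset.prod_eq_zero_iff.mp hz
      by_cases hjk : j = k.castSucc
      · rw [hjk, hq, Function.update_self] at hj0
        have hb : v (φ b) k.castSucc (G b k.castSucc) ≠ 0 := hφ b k.castSucc
        rw [hGcs b k, ← hab] at hb
        exact hb hj0
      · rw [hq, Function.update_of_ne hjk] at hj0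
        exact hφ a j hj0
    calc n ^ m = Fintype.card (Fin m → ZMod n) := hcard.symm
      _ ≤ Fintype.card (Fin r) := Fintype.card_le_of_injective φ hinj
      _ = r := Fintype.card_fin r
end

section
/- Let F_q be the finite field with q elements, and let M_1,…,M_k be n × n matrices over F_q such that every nonzero F_q-linear combination c_1 M_1 + ⋯ + c_k M_k (with (c_1,…,c_k) ≠ 0) is invertible. Then the order-3 tensor T = [M_1|⋯|M_k] of size [n] × [n] × [k] has rank_{F_q}(T) ≥ ((q^k − 1)/(q^k − q^{k−1})) · n. -/
open Finset

/-- Let `F` be the finite field with `q` elements and `M₁,…,M_k` be `n × n` matrices over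
`F` such that every nonzero linear combination of them is invertible.  Then the order-3
tensor `[M₁|⋯|M_k]` has rank at least `((q^k - 1)/(q^k - q^{k-1})) · n`. -/
theorem stmt17 (F : Type*) [Field F] [Fintype F] (n k : ℕ) (hk : 1 ≤ k)
    (M : Fin k → Matrix (Fin n) (Fin n) F)
    (hM : ∀ c : Fin k → F, c ≠ 0 → IsUnit (∑ l, c l • M l)) :
    ((Fintype.card F : ℝ) ^ k - 1) /
        ((Fintype.card F : ℝ) ^ k - (Fintype.card F : ℝ) ^ (k - 1)) * n ≤
      (rank3 (fun (i j : Fin n) (l : Fin k) => M l i j) : ℝ) := by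
  classical
  set q := Fintype.card F with hq
  have hq2 : 2 ≤ q := Fintype.one_lt_card
  set T : Fin n → Fin n → Fin k → F := fun i j l => M l i j with hTdef
  -- Step 1: the defining set of rank3 is nonempty
  have hne : {r : ℕ | ∃ (a : Fin r → Fin n → F) (b : Fin r → Fin n → F)
      (c : Fin r → Fin k → F), ∀ i j l, T i j l = ∑ t, a t i * b t j * c t l}.Nonempty := by
    refine ⟨n * k, fun t i => M (finProdFinEquiv.symm t).2 i (finProdFinEquiv.symm t).1,
      fun t j => if j = (finProdFinEquiv.symm t).1 then 1 else 0,
      fun t l => if l = (finProdFinEquiv.symm t).2 then 1 else 0, ?_⟩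
    intro i j l
    rw [Fintype.sum_equiv (finProdFinEquiv (m := n) (n := k)).symm _
      (fun p : Fin n × Fin k => M p.2 i p.1 * (if j = p.1 then 1 else 0)
        * (if l = p.2 then 1 else 0)) (fun t => rfl)]
    simp [Fintype.sum_prod_type, mul_ite, mul_one, mul_zero, Finset.sum_ite_eq]
    rfl
  -- Step 2: extract an optimal decomposition
  set r := rank3 T with hr
  have hmem : ∃ (a : Fin r → Fin n → F) (b : Fin r → Fin n → F) (c : Fin r → Fin k → F),
      ∀ i j l, T i j l = ∑ t, a t i * b t j * c t l := Nat.sInf_mem hne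
  obtain ⟨a, b, c, hT⟩ := hmem
  -- Step 3: key claim
  have key : ∀ d : Fin k → F, d ≠ 0 →
      n ≤ (univ.filter (fun t : Fin r => (∑ l, d l * c t l) ≠ 0)).card := by
    intro d hd
    set S := univ.filter (fun t : Fin r => (∑ l, d l * c t l) ≠ 0) with hS
    have hNunit := hM d hd
    set N := ∑ l, d l • M l with hN
    have hNe : ∀ i j, N i j = ∑ t ∈ S, (∑ l, d l * c t l) * (a t i * b t j) := by
      intro i j
      have h1 : N i j = ∑ l, d l * T i j l := by
        simp [hN, Matrix.sum_apply, hTdef]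
      have h2 : ∀ l, d l * T i j l = ∑ t : Fin r, d l * (a t i * b t j * c t l) := by
        intro l; rw [hT, Finset.mul_sum]
      have h3 : ∀ t : Fin r, ∑ l, d l * (a t i * b t j * c t l)
          = (∑ l, d l * c t l) * (a t i * b t j) := by
        intro t; rw [Finset.sum_mul]; exact Finset.sum_congr rfl fun l _ => by ring
      calc N i j = ∑ l, d l * T i j l := h1
        _ = ∑ l, ∑ t : Fin r, d l * (a t i * b t j * c t l) :=
              Finset.sum_congr rfl fun l _ => h2 l
        _ = ∑ t : Fin r, ∑ l, d l * (a t i * b t j * c t l) := Finset.sum_comm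
        _ = ∑ t : Fin r, (∑ l, d l * c t l) * (a t i * b t j) :=
              Finset.sum_congr rfl fun t _ => h3 t
        _ = ∑ t ∈ S, (∑ l, d l * c t l) * (a t i * b t j) := by
              refine (Finset.sum_subset S.subset_univ fun t _ ht => ?_).symm
              have h0 : ∑ l, d l * c t l = 0 := by
                by_contra h; exact ht (Finset.mem_filter.2 ⟨Finset.mem_univ t, h⟩)
              rw [h0, zero_mul]
    have hsurj : Function.Surjective N.mulVecLin := by
      intro y
      obtain ⟨u, hu⟩ := hNunit
      refine ⟨(↑u⁻¹ : Matrix (Fin n) (Fin n) F).mulVec y, ?_⟩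
      show N.mulVec _ = y
      rw [Matrix.mulVec_mulVec, ← hu, Units.mul_inv, Matrix.one_mulVec]
    have hrange : LinearMap.range N.mulVecLin ≤
        Submodule.span F ((S.image a : Finset (Fin n → F)) : Set (Fin n → F)) := by
      rintro - ⟨x, rfl⟩
      have hx : N.mulVecLin x
          = ∑ t ∈ S, ((∑ l, d l * c t l) * ∑ j, b t j * x j) • a t := by
        funext i
        rw [Matrix.mulVecLin_apply]
        show ∑ j, N i j * x j = _
        have h4 : ∀ j, N i j * x j = ∑ t ∈ S, (∑ l, d l * c t l) * (a t i * b t j) * x j := by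
          intro j; rw [hNe, Finset.sum_mul]
        rw [Finset.sum_congr rfl fun j _ => h4 j, Finset.sum_comm]
        rw [Finset.sum_apply]
        refine Finset.sum_congr rfl fun t _ => ?_
        rw [Pi.smul_apply, smul_eq_mul, Finset.mul_sum, Finset.sum_mul]
        exact Finset.sum_congr rfl fun j _ => by ring
      rw [hx]
      refine Submodule.sum_mem _ fun t ht => Submodule.smul_mem _ _ (Submodule.subset_span ?_)
      exact Finset.mem_coe.2 (Finset.mem_image_of_mem a ht)
    have htop : (⊤ : Submodule F (Fin n → F)) ≤
        Submodule.span F ((S.image a : Finset (Fin n → F)) : Set (Fin n → F)) := by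
      rw [← LinearMap.range_eq_top.2 hsurj]; exact hrange
    have h5 : n ≤ (S.image a).card := by
      calc n = Module.finrank F (Fin n → F) := (Module.finrank_fin_fun F).symm
        _ = Module.finrank F (⊤ : Submodule F (Fin n → F)) := (finrank_top F _).symm
        _ ≤ Module.finrank F (Submodule.span F
              ((S.image a : Finset (Fin n → F)) : Set (Fin n → F))) :=
              Submodule.finrank_mono htop
        _ ≤ (S.image a).card := finrank_span_finset_le_card _
    exact h5.trans (Finset.card_image_le)
  -- Step 4a: cardinality of the "kernel" sets
  have hker : ∀ v : Fin k → F, v ≠ 0 →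
      (univ.filter (fun d : Fin k → F => (∑ l, d l * v l) = 0)).card = q ^ (k - 1) := by
    intro v hv
    set φ : (Fin k → F) →ₗ[F] F :=
      { toFun := fun d => ∑ l, d l * v l
        map_add' := by intro x y; simp [add_mul, Finset.sum_add_distrib]
        map_smul' := by intro m x; simp [Finset.mul_sum, mul_assoc] } with hφ
    have hsurjφ : Function.Surjective φ := by
      intro x
      obtain ⟨l0, hl0⟩ : ∃ l0, v l0 ≠ 0 := by
        by_contra h; push_neg at h; exact hv (funext h)
      refine ⟨Pi.single l0 (x / v l0), ?_⟩
      simp only [hφ, LinearMap.coe_mk, AddHom.coe_mk]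
      rw [Finset.sum_eq_single l0
        (fun b _ hb => by rw [Pi.single_eq_of_ne hb, zero_mul])
        (fun h => absurd (Finset.mem_univ l0) h)]
      rw [Pi.single_eq_same, div_mul_cancel₀ x hl0]
    have hrk : Module.finrank F (LinearMap.ker φ) = k - 1 := by
      have h := LinearMap.finrank_range_add_finrank_ker φ
      rw [LinearMap.range_eq_top.2 hsurjφ, finrank_top, Module.finrank_self,
        Module.finrank_fin_fun] at h
      omega
    have hcardker : Fintype.card (LinearMap.ker φ) = q ^ (k - 1) := by
      rw [Module.card_eq_pow_finrank (K := F) (V := LinearMap.ker φ), hrk]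
    rw [← hcardker, Fintype.card_subtype]
    congr 1
  -- Step 4b: counting
  have hcount : (q ^ k - 1) * n ≤ r * (q ^ k - q ^ (k - 1)) := by
    have hDcard : (univ.filter (fun d : Fin k → F => d ≠ 0)).card = q ^ k - 1 := by
      rw [Finset.filter_ne', Finset.card_erase_of_mem (Finset.mem_univ _)]
      simp [hq]
    have hsum1 : (q ^ k - 1) * n ≤
        ∑ d ∈ univ.filter (fun d : Fin k → F => d ≠ 0),
          (univ.filter (fun t : Fin r => (∑ l, d l * c t l) ≠ 0)).card := by
      rw [← hDcard]
      have := Finset.card_nsmul_le_sum (univ.filter (fun d : Fin k → F => d ≠ 0))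
        (fun d => (univ.filter (fun t : Fin r => (∑ l, d l * c t l) ≠ 0)).card) n
        (fun d hd => key d (Finset.mem_filter.1 hd).2)
      simpa [smul_eq_mul] using this
    have hsum2 : ∑ d ∈ univ.filter (fun d : Fin k → F => d ≠ 0),
        (univ.filter (fun t : Fin r => (∑ l, d l * c t l) ≠ 0)).card
        ≤ r * (q ^ k - q ^ (k - 1)) := by
      have hswap : ∑ d ∈ univ.filter (fun d : Fin k → F => d ≠ 0),
          (univ.filter (fun t : Fin r => (∑ l, d l * c t l) ≠ 0)).card
          = ∑ t : Fin r, ((univ.filter (fun d : Fin k → F => d ≠ 0)).filter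
              (fun d => (∑ l, d l * c t l) ≠ 0)).card := by
        calc ∑ d ∈ univ.filter (fun d : Fin k → F => d ≠ 0),
              (univ.filter (fun t : Fin r => (∑ l, d l * c t l) ≠ 0)).card
            = ∑ d ∈ univ.filter (fun d : Fin k → F => d ≠ 0),
                ∑ t : Fin r, if (∑ l, d l * c t l) ≠ 0 then 1 else 0 :=
              Finset.sum_congr rfl fun d _ => Finset.card_filter _ _
          _ = ∑ t : Fin r, ∑ d ∈ univ.filter (fun d : Fin k → F => d ≠ 0),
                if (∑ l, d l * c t l) ≠ 0 then 1 else 0 := Finset.sum_comm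
          _ = ∑ t : Fin r, ((univ.filter (fun d : Fin k → F => d ≠ 0)).filter
                (fun d => (∑ l, d l * c t l) ≠ 0)).card :=
              Finset.sum_congr rfl fun t _ => (Finset.card_filter _ _).symm
      rw [hswap]
      have hbound : ∀ t : Fin r, ((univ.filter (fun d : Fin k → F => d ≠ 0)).filter
          (fun d => (∑ l, d l * c t l) ≠ 0)).card ≤ q ^ k - q ^ (k - 1) := by
        intro t
        by_cases hct : c t = 0
        · have : ((univ.filter (fun d : Fin k → F => d ≠ 0)).filter
              (fun d => (∑ l, d l * c t l) ≠ 0)) = ∅ := by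
            refine Finset.filter_false_of_mem fun d _ => ?_
            simp [hct]
          rw [this]; simp
        · refine le_trans (Finset.card_le_card (Finset.filter_subset_filter _
            (Finset.filter_subset _ _))) ?_
          have htot := Finset.card_filter_add_card_filter_not
            (s := (univ : Finset (Fin k → F)))
            (p := fun d => (∑ l, d l * c t l) = 0)
          have hcu : (univ : Finset (Fin k → F)).card = q ^ k := by simp [hq]
          have hk' := hker (c t) hct
          have heq : (univ.filter (fun d : Fin k → F => ¬ (∑ l, d l * c t l) = 0))
              = (univ.filter (fun d : Fin k → F => (∑ l, d l * c t l) ≠ 0)) := rfl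
          rw [heq, hk', hcu] at htot
          exact le_of_eq (Nat.eq_sub_of_add_eq' htot)
      calc ∑ t : Fin r, ((univ.filter (fun d : Fin k → F => d ≠ 0)).filter
              (fun d => (∑ l, d l * c t l) ≠ 0)).card
          ≤ ∑ _t : Fin r, (q ^ k - q ^ (k - 1)) := Finset.sum_le_sum fun t _ => hbound t
        _ = r * (q ^ k - q ^ (k - 1)) := by simp [Finset.sum_const, mul_comm]
    exact hsum1.trans hsum2
  -- Step 5: conclude over ℝ
  have h1q : 1 ≤ q ^ k := Nat.one_le_pow _ _ (by omega)
  have hlt : q ^ (k - 1) < q ^ k :=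
    Nat.pow_lt_pow_right (by omega) (by omega)
  have hB : (0 : ℝ) < (q : ℝ) ^ k - (q : ℝ) ^ (k - 1) := by
    have : ((q : ℝ)) ^ (k - 1) < (q : ℝ) ^ k := by
      exact_mod_cast Nat.cast_lt.2 hlt
    linarith
  rw [div_mul_eq_mul_div, div_le_iff₀ hB]
  have hcast : (((q ^ k - 1) * n : ℕ) : ℝ) ≤ ((r * (q ^ k - q ^ (k - 1)) : ℕ) : ℝ) :=
    Nat.cast_le.2 hcount
  push_cast [Nat.cast_sub h1q, Nat.cast_sub hlt.le] at hcast
  linarith [hcast]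
end

section
/- Let F_q be the finite field with q elements, and let M_1,…,M_n be n × n matrices over F_q such that every nonzero F_q-linear combination of M_1,…,M_n is invertible. Then the order-3 tensor T = [M_1|⋯|M_n] of size [n] × [n] × [n] has rank_{F_q}(T) ≥ ((2q−1)/(q−1)) · n − ⌈log_q n⌉ − q/(q−1). -/
set_option linter.unusedSectionVars false

open Finset

namespace S18

variable {F : Type*} [Field F] [Fintype F] [DecidableEq F]

/-- Hamming weight of a vector. -/
def wt {ι : Type*} [Fintype ι] (v : ι → F) : ℕ := (univ.filter fun i => v i ≠ 0).card

section Weights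
variable {ι : Type*} [Fintype ι]

lemma wt_eq_zero {v : ι → F} : wt v = 0 ↔ v = 0 := by
  simp [wt, Finset.filter_eq_empty_iff, Finset.card_eq_zero, funext_iff]

lemma key_count (w v : ι → F) :
    ∑ α : F, wt (v - α • w) =
      (Fintype.card F - 1) * wt w
        + Fintype.card F * (univ.filter fun i => w i = 0 ∧ v i ≠ 0).card := by
  have hq : 1 ≤ Fintype.card F := Fintype.card_pos
  -- turn weights into double sums
  have h1 : ∀ u : ι → F, wt u = ∑ i : ι, if u i ≠ 0 then 1 else 0 := by
    intro u; simp [wt, Finset.card_filter]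
  simp_rw [h1]
  rw [Finset.sum_comm]
  have hinner : ∀ i : ι, (∑ α : F, if (v - α • w) i ≠ 0 then 1 else 0) =
      (Fintype.card F - 1) * (if w i ≠ 0 then 1 else 0)
        + Fintype.card F * (if w i = 0 ∧ v i ≠ 0 then 1 else 0) := by
    intro i
    have : (∑ α : F, if (v - α • w) i ≠ 0 then 1 else 0)
        = (univ.filter fun α : F => v i - α * w i ≠ 0).card := by
      simp [Finset.card_filter]
    rw [this]
    by_cases hw : w i = 0
    · by_cases hv : v i = 0
      · simp [hw, hv]
      · have : (univ.filter fun α : F => v i - α * w i ≠ 0) = univ := by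
          ext α; simp [hw, hv]
        simp [this, hw, hv]
    · -- unique solution α = v i / w i
      have hset : (univ.filter fun α : F => ¬(v i - α * w i ≠ 0)) = {v i / w i} := by
        ext α
        simp only [Finset.mem_filter, Finset.mem_univ, true_and, not_not,
          Finset.mem_singleton, sub_eq_zero]
        constructor
        · intro h; field_simp [hw]; linear_combination -h
        · rintro rfl; field_simp
      have := Finset.card_filter_add_card_filter_not
        (s := (univ : Finset F)) (p := fun α : F => v i - α * w i ≠ 0)
      rw [hset] at this
      simp only [Finset.card_singleton, Finset.card_univ] at this
      have hcard : (univ.filter fun α : F => v i - α * w i ≠ 0).card = Fintype.card F - 1 := by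
        omega
      rw [hcard]; simp [hw]
  simp_rw [hinner]
  rw [Finset.sum_add_distrib, ← Finset.mul_sum, ← Finset.mul_sum, Finset.card_filter]

lemma minwt_bound (C : Submodule F (ι → F)) (w v : ι → F) (hwC : w ∈ C)
    (hmin : ∀ u ∈ C, u ≠ 0 → wt w ≤ wt u) (hvC : v ∈ C)
    (hvs : ∀ α : F, v ≠ α • w) :
    wt w ≤ Fintype.card F * (univ.filter fun i => w i = 0 ∧ v i ≠ 0).card := by
  have hq : 1 ≤ Fintype.card F := Fintype.card_pos
  have hterm : ∀ α : F, wt w ≤ wt (v - α • w) := by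
    intro α
    refine hmin _ (C.sub_mem hvC (C.smul_mem α hwC)) ?_
    intro h0
    exact hvs α (by rwa [sub_eq_zero] at h0)
  have hsum : Fintype.card F * wt w ≤ ∑ α : F, wt (v - α • w) := by
    calc Fintype.card F * wt w = ∑ _α : F, wt w := by
          rw [Finset.sum_const, Finset.card_univ, smul_eq_mul]
      _ ≤ _ := Finset.sum_le_sum fun α _ => hterm α
  rw [key_count] at hsum
  set m := (univ.filter fun i => w i = 0 ∧ v i ≠ 0).card
  have h1 : (Fintype.card F : ℤ) * wt w ≤ (Fintype.card F - 1) * wt w + Fintype.card F * m := by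
    have := hsum
    push_cast [Nat.cast_sub hq] at *
    exact_mod_cast this
  have : (wt w : ℤ) ≤ Fintype.card F * m := by linarith
  exact_mod_cast this

lemma mem_span_of_supported (C : Submodule F (ι → F)) (w v : ι → F) (hwC : w ∈ C)
    (hw0 : w ≠ 0) (hmin : ∀ u ∈ C, u ≠ 0 → wt w ≤ wt u) (hvC : v ∈ C)
    (hsupp : ∀ i, w i = 0 → v i = 0) : ∃ α : F, v = α • w := by
  by_contra h
  push_neg at h
  have := minwt_bound C w v hwC hmin hvC h
  have hempty : (univ.filter fun i => w i = 0 ∧ v i ≠ 0) = ∅ := by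
    refine Finset.filter_eq_empty_iff.2 ?_
    rintro i - ⟨h1, h2⟩; exact h2 (hsupp i h1)
  rw [hempty] at this
  simp only [Finset.card_empty, Nat.mul_zero, Nat.le_zero] at this
  exact hw0 (wt_eq_zero.1 this)

/-- weight of restriction to the zero set of `w`. -/
lemma wt_restrict (w v : ι → F) :
    wt (fun i' : {i // w i = 0} => v i'.val) =
      (univ.filter fun i => w i = 0 ∧ v i ≠ 0).card := by
  rw [wt, ← Fintype.card_subtype, ← Fintype.card_subtype]
  exact Fintype.card_congr (Equiv.subtypeSubtypeEquivSubtypeInter (fun i => w i = 0) (fun i => v i ≠ 0))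

theorem griesmer : ∀ (k : ℕ) {ι : Type} [Fintype ι] (d : ℕ)
    (C : Submodule F (ι → F)), Module.finrank F C = k →
    (∀ v ∈ C, v ≠ 0 → d ≤ wt v) →
    ∑ i ∈ Finset.range k, d ⌈/⌉ (Fintype.card F) ^ i ≤ Fintype.card ι := by
  intro k
  induction k with
  | zero => intro ι _ d C _ _; simp
  | succ k IH =>
    intro ι _ d C hrk hd
    have hq : 2 ≤ Fintype.card F := Fintype.one_lt_card
    -- C is nontrivial
    have hCbot : C ≠ ⊥ := by
      intro h; rw [h] at hrk; simp at hrk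
    obtain ⟨u₀, hu₀C, hu₀⟩ := Submodule.exists_mem_ne_zero_of_ne_bot hCbot
    -- minimal weight codeword
    set ws : Set ℕ := {m | ∃ u, u ∈ C ∧ u ≠ 0 ∧ wt u = m} with hws
    have hwsne : ws.Nonempty := ⟨wt u₀, u₀, hu₀C, hu₀, rfl⟩
    obtain ⟨w, hwC, hw0, hwe⟩ := Nat.sInf_mem hwsne
    have hmin : ∀ u ∈ C, u ≠ 0 → wt w ≤ wt u := by
      intro u huC hu; rw [hwe]; exact Nat.sInf_le ⟨u, huC, hu, rfl⟩
    set e := wt w with he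
    have he0 : e ≠ 0 := fun h => hw0 (wt_eq_zero.1 h)
    -- residual code
    let ρ : (ι → F) →ₗ[F] ({i // w i = 0} → F) := LinearMap.funLeft F F Subtype.val
    let f : C →ₗ[F] ({i // w i = 0} → F) := ρ.comp C.subtype
    have hρw : ρ w = 0 := by funext i'; exact i'.2
    -- kernel of f is the span of w
    have hker : LinearMap.ker f = Submodule.span F {(⟨w, hwC⟩ : C)} := by
      ext ⟨v, hvC⟩
      simp only [LinearMap.mem_ker, Submodule.mem_span_singleton]
      constructor
      · intro h0
        have hsupp : ∀ i, w i = 0 → v i = 0 := by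
          intro i hi
          have := congrFun h0 ⟨i, hi⟩
          simpa [f, ρ, LinearMap.funLeft] using this
        obtain ⟨α, hα⟩ := mem_span_of_supported C w v hwC hw0 hmin hvC hsupp
        exact ⟨α, by ext; simp [hα]⟩
      · rintro ⟨α, hα⟩
        have : v = α • w := by
          have := congrArg (Subtype.val) hα; simpa using this.symm
        funext i'
        simp [f, ρ, LinearMap.funLeft, this, i'.2]
    have hwne : (⟨w, hwC⟩ : C) ≠ 0 := by
      intro h; exact hw0 (by simpa using congrArg Subtype.val h)
    have hkerrank : Module.finrank F (LinearMap.ker f) = 1 := by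
      rw [hker]; exact finrank_span_singleton hwne
    have hrange : LinearMap.range f = C.map ρ := by
      rw [LinearMap.range_comp, Submodule.range_subtype]
    have hrank' : Module.finrank F (C.map ρ) = k := by
      have := LinearMap.finrank_range_add_finrank_ker f
      rw [hkerrank, hrk, hrange] at this
      omega
    -- residual distance
    have hd' : ∀ v' ∈ C.map ρ, v' ≠ 0 → e ⌈/⌉ (Fintype.card F) ≤ wt v' := by
      rintro v' ⟨v, hvC, rfl⟩ hne
      have hvs : ∀ α : F, v ≠ α • w := by
        rintro α rfl
        apply hne
        rw [map_smul, hρw, smul_zero]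
      have hb := minwt_bound C w v hwC hmin hvC hvs
      rw [ceilDiv_le_iff_le_smul (by omega : 0 < Fintype.card F), smul_eq_mul]
      have : wt (ρ v) = (univ.filter fun i => w i = 0 ∧ v i ≠ 0).card := wt_restrict w v
      rw [this]
      exact hb
    have hIH := IH (e ⌈/⌉ Fintype.card F) (C.map ρ) hrank' hd'
    -- cardinality split
    have hcards : Fintype.card ι = e + Fintype.card {i // w i = 0} := by
      rw [he, wt, Fintype.card_subtype]
      have h2 := Finset.card_filter_add_card_filter_not (s := (univ : Finset ι))
        (p := fun i => w i ≠ 0)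
      rw [Finset.card_univ] at h2
      rw [← h2]
      congr 1
      apply congrArg
      apply Finset.filter_congr
      intro i _; simp
    -- sum manipulation
    have hde : d ≤ e := hd w hwC hw0
    calc ∑ i ∈ Finset.range (k+1), d ⌈/⌉ (Fintype.card F) ^ i
        = (∑ i ∈ Finset.range k, d ⌈/⌉ (Fintype.card F) ^ (i+1)) + d ⌈/⌉ (Fintype.card F) ^ 0 :=
          Finset.sum_range_succ' _ _
      _ ≤ (∑ i ∈ Finset.range k, (e ⌈/⌉ Fintype.card F) ⌈/⌉ (Fintype.card F) ^ i) + e := by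
          gcongr with i hi
          · rw [ceilDiv_le_iff_le_smul (by positivity : (0:ℕ) < Fintype.card F ^ (i+1)),
              smul_eq_mul, pow_succ]
            calc d ≤ e := hde
              _ ≤ Fintype.card F * (e ⌈/⌉ Fintype.card F) := by
                  have := le_smul_ceilDiv (by omega : 0 < Fintype.card F) (b := e)
                  simpa using this
              _ ≤ Fintype.card F * ((Fintype.card F)^i *
                    ((e ⌈/⌉ Fintype.card F) ⌈/⌉ (Fintype.card F)^i)) := by
                  gcongr
                  have := le_smul_ceilDiv (by positivity : (0:ℕ) < Fintype.card F ^ i)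
                    (b := e ⌈/⌉ Fintype.card F)
                  simpa using this
              _ = Fintype.card F ^ i * Fintype.card F *
                    ((e ⌈/⌉ Fintype.card F) ⌈/⌉ (Fintype.card F)^i) := by ring
          · simpa using hde
      _ ≤ Fintype.card {i // w i = 0} + e := by gcongr
      _ = Fintype.card ι := by omega

end Weights

lemma numeric {q n : ℕ} (hq : 2 ≤ q) (hn : 1 ≤ n) :
    (2*(q:ℝ)-1)/((q:ℝ)-1) * n - (Nat.clog q n : ℝ) - (q:ℝ)/((q:ℝ)-1)
      ≤ ∑ i ∈ Finset.range n, ((n ⌈/⌉ q ^ i : ℕ) : ℝ) := by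
  have hq1 : (1:ℝ) < q := by exact_mod_cast hq
  have hq0 : (0:ℝ) < q := by linarith
  set k0 := Nat.clog q n with hk0
  have hk0n : k0 ≤ n := by
    rw [hk0, Nat.clog_le_iff_le_pow hq]
    calc n ≤ 2 ^ n := (Nat.lt_two_pow_self (n := n)).le
      _ ≤ q ^ n := Nat.pow_le_pow_left hq n
  have hnq : n ≤ q ^ k0 := Nat.le_pow_clog hq n
  have hsplit : ∑ i ∈ Finset.range n, ((n ⌈/⌉ q ^ i : ℕ) : ℝ)
      = (∑ i ∈ Finset.range k0, ((n ⌈/⌉ q ^ i : ℕ) : ℝ))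
        + ∑ i ∈ Finset.Ico k0 n, ((n ⌈/⌉ q ^ i : ℕ) : ℝ) := by
    rw [Finset.range_eq_Ico, ← Finset.sum_Ico_consecutive _ (Nat.zero_le k0) hk0n,
      ← Finset.range_eq_Ico]
  rw [hsplit]
  have hb1 : ∑ i ∈ Finset.range k0, (n:ℝ) * ((1:ℝ)/q) ^ i
      ≤ ∑ i ∈ Finset.range k0, ((n ⌈/⌉ q ^ i : ℕ) : ℝ) := by
    apply Finset.sum_le_sum
    intro i _
    have hpow : (0:ℕ) < q ^ i := by positivity
    have h := le_smul_ceilDiv hpow (b := n)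
    rw [smul_eq_mul] at h
    have h' : (n:ℝ) ≤ (q:ℝ)^i * ((n ⌈/⌉ q ^ i : ℕ) : ℝ) := by exact_mod_cast h
    rw [one_div, inv_pow]
    rw [mul_comm, ← div_eq_inv_mul (n:ℝ), div_le_iff₀ (by positivity)]
    linarith [h']
  have hb2 : ((n:ℝ) - k0) ≤ ∑ i ∈ Finset.Ico k0 n, ((n ⌈/⌉ q ^ i : ℕ) : ℝ) := by
    have : ∀ i ∈ Finset.Ico k0 n, (1:ℝ) ≤ ((n ⌈/⌉ q ^ i : ℕ) : ℝ) := by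
      intro i _
      have hpow : (0:ℕ) < q ^ i := by positivity
      have : 1 ≤ n ⌈/⌉ q ^ i := by
        rcases Nat.eq_zero_or_pos (n ⌈/⌉ q ^ i) with h | h
        · exfalso
          have := (ceilDiv_le_iff_le_smul hpow (b := n) (c := 0)).1 h.le
          simp at this
          omega
        · exact h
      exact_mod_cast this
    calc ((n:ℝ) - k0) = (Finset.Ico k0 n).card * (1:ℝ) := by
          rw [Nat.card_Ico, mul_one, Nat.cast_sub hk0n]
      _ = ∑ _i ∈ Finset.Ico k0 n, (1:ℝ) := by rw [Finset.sum_const, nsmul_eq_mul]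
      _ ≤ _ := Finset.sum_le_sum this
  have hgeom : ∑ i ∈ Finset.range k0, (n:ℝ) * ((1:ℝ)/q) ^ i
      = (n:ℝ) * ((((1:ℝ)/q) ^ k0 - 1) / ((1:ℝ)/q - 1)) := by
    rw [← Finset.mul_sum, geom_sum_eq (by intro h; rw [div_eq_one_iff_eq (by linarith)] at h; linarith)]
  have hx1 : (n:ℝ) * ((1:ℝ)/q) ^ k0 ≤ 1 := by
    have h' : (n:ℝ) ≤ (q:ℝ) ^ k0 := by exact_mod_cast hnq
    rw [one_div, inv_pow, mul_comm, inv_mul_le_iff₀ (by positivity), mul_one]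
    exact h'
  have hK : (0:ℝ) ≤ (k0:ℝ) := Nat.cast_nonneg _
  have hN : (1:ℝ) ≤ (n:ℝ) := by exact_mod_cast hn
  set x := ((1:ℝ)/q) ^ k0 with hxdef
  have hx0 : 0 < x := by positivity
  have key : (2*(q:ℝ)-1)/((q:ℝ)-1) * n - (k0:ℝ) - (q:ℝ)/((q:ℝ)-1)
      ≤ (n:ℝ) * ((x - 1) / ((1:ℝ)/q - 1)) + ((n:ℝ) - k0) := by
    have hq1' : (0:ℝ) < (q:ℝ) - 1 := by linarith
    have hqq : ((1:ℝ)/q - 1) ≠ 0 := by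
      have : (1:ℝ)/q < 1 := by rw [div_lt_one hq0]; linarith
      linarith
    have hrew : (x - 1) / ((1:ℝ)/q - 1) = (1 - x) * q / ((q:ℝ) - 1) := by
      rw [div_eq_div_iff hqq (ne_of_gt hq1')]
      field_simp
      ring
    have main : (2*(q:ℝ)-1)*n - q ≤ n*(1-x)*q + n*((q:ℝ)-1) := by nlinarith [hx1, hq0]
    have e1 : (2*(q:ℝ)-1)/((q:ℝ)-1) * n - (k0:ℝ) - (q:ℝ)/((q:ℝ)-1)
        = ((2*(q:ℝ)-1)*n - q)/((q:ℝ)-1) - k0 := by ring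
    have e2 : (n:ℝ) * ((1 - x) * q / ((q:ℝ) - 1)) + ((n:ℝ) - k0)
        = (n*(1-x)*q + n*((q:ℝ)-1))/((q:ℝ)-1) - k0 := by
      field_simp
      ring
    rw [e1, hrew, e2]
    have := main
    gcongr
  calc (2*(q:ℝ)-1)/((q:ℝ)-1) * n - (k0:ℝ) - (q:ℝ)/((q:ℝ)-1)
      ≤ (n:ℝ) * ((x - 1) / ((1:ℝ)/q - 1)) + ((n:ℝ) - k0) := key
    _ ≤ _ := by rw [← hgeom]; exact add_le_add hb1 hb2

-- rank set is nonempty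
lemma rank_set_nonempty {n1 n2 n3 : ℕ} (T : Fin n1 → Fin n2 → Fin n3 → F) :
    {r : ℕ | ∃ (a : Fin r → Fin n1 → F) (b : Fin r → Fin n2 → F) (c : Fin r → Fin n3 → F),
      ∀ i j k, T i j k = ∑ l, a l i * b l j * c l k}.Nonempty := by
  classical
  let E : Fin n1 × (Fin n2 × Fin n3) ≃ Fin (n1 * (n2 * n3)) :=
    (Equiv.prodCongr (Equiv.refl (Fin n1)) finProdFinEquiv).trans finProdFinEquiv
  refine ⟨n1 * (n2 * n3),
    fun l i => if (E.symm l).1 = i then 1 else 0,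
    fun l j => if (E.symm l).2.1 = j then 1 else 0,
    fun l k => if (E.symm l).2.2 = k then T (E.symm l).1 (E.symm l).2.1 (E.symm l).2.2 else 0,
    ?_⟩
  intro i j k
  rw [← Equiv.sum_comp E (fun l => _ * _ * _)]
  simp only [Equiv.symm_apply_apply]
  rw [Fintype.sum_prod_type]
  simp [Fintype.sum_prod_type, ite_mul, mul_ite, Finset.sum_ite_eq]

lemma weight_bound {n r : ℕ} (M : Fin n → Matrix (Fin n) (Fin n) F)
    (a b : Fin r → Fin n → F) (c : Fin r → Fin n → F)
    (hT : ∀ i j k, M k i j = ∑ l, a l i * b l j * c l k)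
    (x : Fin n → F) (hx : IsUnit (∑ k, x k • M k)) :
    n ≤ wt (fun l => ∑ k, x k * c l k) := by
  classical
  set φ : Fin r → F := fun l => ∑ k, x k * c l k with hφ
  set Mx := ∑ k, x k • M k with hMx
  have hent : ∀ i j, Mx i j = ∑ l, (a l i * b l j) * φ l := by
    intro i j
    calc Mx i j = ∑ k, x k * M k i j := by
          rw [hMx, Matrix.sum_apply]; simp
      _ = ∑ k, x k * ∑ l, a l i * b l j * c l k := by simp_rw [hT]
      _ = ∑ k, ∑ l, x k * (a l i * b l j * c l k) := by simp_rw [Finset.mul_sum]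
      _ = ∑ l, ∑ k, x k * (a l i * b l j * c l k) := Finset.sum_comm
      _ = ∑ l, (a l i * b l j) * φ l := by
          apply Finset.sum_congr rfl; intro l _
          rw [hφ, Finset.mul_sum]; apply Finset.sum_congr rfl; intro k _; ring
  set s := univ.filter fun l => φ l ≠ 0 with hs
  obtain ⟨U, hU⟩ := hx
  have hsurj : ∀ y : Fin n → F, ∃ x₀, Mx.mulVec x₀ = y := by
    intro y
    refine ⟨(↑U⁻¹ : Matrix (Fin n) (Fin n) F).mulVec y, ?_⟩
    rw [Matrix.mulVec_mulVec, ← hU, ← Units.val_mul, mul_inv_cancel, Units.val_one,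
      Matrix.one_mulVec]
  have hspan : ∀ y : Fin n → F,
      y ∈ Submodule.span F ((s.image a : Finset (Fin n → F)) : Set (Fin n → F)) := by
    intro y
    obtain ⟨x₀, hx₀⟩ := hsurj y
    have h1 : y = ∑ l : Fin r, (φ l * ∑ j, b l j * x₀ j) • a l := by
      funext i
      rw [← hx₀, Finset.sum_apply]
      simp only [Pi.smul_apply, smul_eq_mul]
      calc Mx.mulVec x₀ i = ∑ j, Mx i j * x₀ j := by
            simp [Matrix.mulVec, dotProduct]
        _ = ∑ j, (∑ l, (a l i * b l j) * φ l) * x₀ j := by simp_rw [hent]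
        _ = ∑ j, ∑ l, ((a l i * b l j) * φ l) * x₀ j := by simp_rw [Finset.sum_mul]
        _ = ∑ l, ∑ j, ((a l i * b l j) * φ l) * x₀ j := Finset.sum_comm
        _ = ∑ l, (φ l * ∑ j, b l j * x₀ j) * a l i := by
            apply Finset.sum_congr rfl; intro l _
            rw [Finset.mul_sum, Finset.sum_mul]
            apply Finset.sum_congr rfl; intro j _; ring
    have h2 : y = ∑ l ∈ s, (φ l * ∑ j, b l j * x₀ j) • a l := by
      rw [h1]
      symm
      apply Finset.sum_subset (Finset.subset_univ s)
      intro l _ hl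
      have : φ l = 0 := by simpa [hs] using hl
      simp [this]
    rw [h2]
    apply Submodule.sum_mem
    intro l hl
    exact Submodule.smul_mem _ _
      (Submodule.subset_span (Finset.mem_coe.2 (Finset.mem_image_of_mem a hl)))
  have htop : Submodule.span F ((s.image a : Finset (Fin n → F)) : Set (Fin n → F)) = ⊤ :=
    Submodule.eq_top_iff'.2 hspan
  calc n = Module.finrank F (Fin n → F) := (Module.finrank_fin_fun F).symm
    _ = Module.finrank F
        ↥(Submodule.span F ((s.image a : Finset (Fin n → F)) : Set (Fin n → F))) := by
        rw [htop, finrank_top]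
    _ ≤ (s.image a).card := finrank_span_finset_le_card _
    _ ≤ s.card := Finset.card_image_le
    _ = wt φ := rfl

end S18

/-- Let `F` be the finite field with `q` elements and `M₁,…,Mₙ` be `n × n` matrices over
`F` such that every nonzero linear combination of them is invertible.  Then the tensor
`[M₁|⋯|Mₙ]` has rank at least `((2q-1)/(q-1)) · n - ⌈log_q n⌉ - q/(q-1)`. -/
theorem stmt18 (F : Type*) [Field F] [Fintype F] (n : ℕ)
    (M : Fin n → Matrix (Fin n) (Fin n) F)
    (hM : ∀ c : Fin n → F, c ≠ 0 → IsUnit (∑ l, c l • M l)) :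
    (2 * (Fintype.card F : ℝ) - 1) / ((Fintype.card F : ℝ) - 1) * n -
        (Nat.clog (Fintype.card F) n : ℝ) -
        (Fintype.card F : ℝ) / ((Fintype.card F : ℝ) - 1) ≤
      (rank3 (fun (i j : Fin n) (l : Fin n) => M l i j) : ℝ) := by
  classical
  have hq : 2 ≤ Fintype.card F := Fintype.one_lt_card
  have hqR : (2:ℝ) ≤ (Fintype.card F : ℝ) := by exact_mod_cast hq
  rcases Nat.eq_zero_or_pos n with hn | hn
  · subst hn
    have h1 : (0:ℝ) ≤ ((rank3 (fun (i j : Fin 0) (l : Fin 0) => M l i j) : ℕ) : ℝ) :=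
      Nat.cast_nonneg _
    have h2 : (0:ℝ) ≤ (Fintype.card F : ℝ) / ((Fintype.card F : ℝ) - 1) := by
      apply div_nonneg <;> linarith
    simp only [Nat.clog_zero_right, Nat.cast_zero, Nat.cast_ofNat, mul_zero]
    linarith
  -- main case
  obtain ⟨a, b, c, hT⟩ :=
    Nat.sInf_mem (S18.rank_set_nonempty (fun (i j : Fin n) (l : Fin n) => M l i j))
  set r := rank3 (fun (i j : Fin n) (l : Fin n) => M l i j) with hr
  -- the code map
  let Φ : (Fin n → F) →ₗ[F] (Fin r → F) :=
    { toFun := fun x l => ∑ k, x k * c l k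
      map_add' := by
        intro x y; funext l
        simp [add_mul, Finset.sum_add_distrib]
      map_smul' := by
        intro m x; funext l
        simp [Finset.mul_sum, mul_assoc] }
  have hwb : ∀ x : Fin n → F, x ≠ 0 → n ≤ S18.wt (Φ x) := by
    intro x hx
    exact S18.weight_bound M a b c (fun i j k => hT i j k) x (hM x hx)
  have hker : LinearMap.ker Φ = ⊥ := by
    rw [LinearMap.ker_eq_bot']
    intro x hx0
    by_contra hx
    have := hwb x hx
    rw [hx0] at this
    have : S18.wt (0 : Fin r → F) = 0 := by simp [S18.wt]
    omega
  have hrk : Module.finrank F ↥(LinearMap.range Φ) = n := by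
    have h := LinearMap.finrank_range_add_finrank_ker Φ
    rw [hker, finrank_bot, Module.finrank_fin_fun] at h
    omega
  have hmin : ∀ v ∈ LinearMap.range Φ, v ≠ 0 → n ≤ S18.wt v := by
    rintro v ⟨x, rfl⟩ hv
    refine hwb x ?_
    rintro rfl
    exact hv (map_zero Φ)
  have hg := S18.griesmer n n (LinearMap.range Φ) hrk hmin
  rw [Fintype.card_fin] at hg
  have hnum := S18.numeric hq hn
  calc (2 * (Fintype.card F : ℝ) - 1) / ((Fintype.card F : ℝ) - 1) * n -
        (Nat.clog (Fintype.card F) n : ℝ) -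
        (Fintype.card F : ℝ) / ((Fintype.card F : ℝ) - 1)
      ≤ ∑ i ∈ Finset.range n, ((n ⌈/⌉ (Fintype.card F) ^ i : ℕ) : ℝ) := hnum
    _ = ((∑ i ∈ Finset.range n, n ⌈/⌉ (Fintype.card F) ^ i : ℕ) : ℝ) := by push_cast; rfl
    _ ≤ (r : ℝ) := by exact_mod_cast hg
end
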